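/- arXiv:1705.00085 — 6 statements merged into one kernel-verified Lean document; each statement's English description precedes it below -/
import Mathlib

section
/- Let n > 2 be an odd natural number, ξ = exp(2πi/n), and let λ ∈ ℂ be either transcendental over ℚ, or algebraic with degree over the field ℚ(ξ) at least n² − n + 1. Let c(λ) = (1, λ, λ², …, λ^{n−1}) ∈ ℂ^n. Then the family of 2n vectors {M^l c(λ) : l ∈ ℤ_n} ∪ {M^l D c(λ) : l ∈ ℤ_n} is a full spark frame: every subfamily of n of these 2n vectors is linearly independent, hence a basis of ℂ^n. -/
/-- `ξ = exp(2πi/n)`, a primitive `n`-th root of unity. -/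
noncomputable def xi (n : ℕ) : ℂ := Complex.exp (2 * Real.pi * Complex.I / n)

/-- The family of `2n` vectors `{M^l c(λ)} ∪ {M^l D c(λ)}` where
`c(λ) = (1, λ, …, λ^{n-1})`, `M = diag(1, ξ, …, ξ^{n-1})` and `D` is the reversal:
`(M^l c(λ))_j = ξ^{jl} λ^j` and `(M^l D c(λ))_j = ξ^{jl} λ^{(n-j) mod n}`. -/
noncomputable def lambdaOrbit (n : ℕ) (lam : ℂ) : Fin 2 × Fin n → Fin n → ℂ :=
  fun p j =>
    xi n ^ ((j : ℕ) * (p.2 : ℕ)) *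
      (if p.1 = 0 then lam ^ (j : ℕ) else lam ^ ((n - (j : ℕ)) % n))

/-- A family of `2n` vectors in `ℂⁿ` is a full spark frame (has the Haar property)
if every subfamily of `n` of the vectors is linearly independent. -/
def IsFullSpark (n : ℕ) (f : Fin 2 × Fin n → Fin n → ℂ) : Prop :=
  ∀ S : Finset (Fin 2 × Fin n), S.card = n →
    LinearIndependent ℂ (fun i : {x // x ∈ S} => f i.1)

open Polynomial Matrix Finset

def expE (n : ℕ) (t : Fin 2) (j : Fin n) : ℕ := if t = 0 then (j : ℕ) else (n - (j : ℕ)) % n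

def gzE (n : ℕ) (j : Fin n) : ℤ := (((n - (j : ℕ)) % n : ℕ) : ℤ) - (j : ℕ)

lemma fin2_eq_zero {t : Fin 2} (h : ¬ t = 1) : t = 0 := by omega

lemma gzE_val {n : ℕ} (j : Fin n) :
    gzE n j = if (j : ℕ) = 0 then 0 else (n : ℤ) - 2 * (j : ℕ) := by
  have hj := j.2
  unfold gzE
  split_ifs with h
  · simp [h]
  · have h1 : (n - (j : ℕ)) % n = n - (j : ℕ) := Nat.mod_eq_of_lt (by omega)
    rw [h1]
    push_cast [Nat.cast_sub (le_of_lt hj)]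
    ring

lemma sum_sep_unique {α : Type*} [DecidableEq α] [Fintype α] (g : α → ℤ) (R T : Finset α)
    (hcard : T.card = R.card)
    (hsep : ∀ x ∉ R, ∀ y ∈ R, g y < g x)
    (hsum : ∑ j ∈ T, g j = ∑ j ∈ R, g j) : T = R := by
  by_contra hne
  have hTR : (T \ R).Nonempty := by
    rw [Finset.sdiff_nonempty]
    intro hsub
    exact hne (Finset.eq_of_subset_of_card_le hsub (le_of_eq hcard.symm))
  have hc1 : (T \ R).card + (T ∩ R).card = T.card := Finset.card_sdiff_add_card_inter T R
  have hc2 : (R \ T).card + (R ∩ T).card = R.card := Finset.card_sdiff_add_card_inter R T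
  have hic : (T ∩ R).card = (R ∩ T).card := by rw [Finset.inter_comm]
  have hcd : (T \ R).card = (R \ T).card := by omega
  have hRT : (R \ T).Nonempty := by
    rw [← Finset.card_pos, ← hcd, Finset.card_pos]; exact hTR
  have hs1 : ∑ j ∈ T \ (T ∩ R), g j + ∑ j ∈ T ∩ R, g j = ∑ j ∈ T, g j :=
    Finset.sum_sdiff Finset.inter_subset_left
  have hs2 : ∑ j ∈ R \ (R ∩ T), g j + ∑ j ∈ R ∩ T, g j = ∑ j ∈ R, g j :=
    Finset.sum_sdiff Finset.inter_subset_left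
  rw [Finset.sdiff_inter_self_left] at hs1 hs2
  have hinter : ∑ j ∈ T ∩ R, g j = ∑ j ∈ R ∩ T, g j := by rw [Finset.inter_comm]
  have hdiffsum : ∑ j ∈ T \ R, g j = ∑ j ∈ R \ T, g j := by omega
  obtain ⟨y0, hy0mem, hy0max⟩ := Finset.exists_max_image (R \ T) g hRT
  have hy0R : y0 ∈ R := (Finset.mem_sdiff.mp hy0mem).1
  have hub : ∑ j ∈ R \ T, g j ≤ (R \ T).card • g y0 :=
    Finset.sum_le_card_nsmul _ _ _ (fun x hx => hy0max x hx)
  have hlb : (T \ R).card • (g y0 + 1) ≤ ∑ j ∈ T \ R, g j := by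
    apply Finset.card_nsmul_le_sum
    intro x hx
    have hxR : x ∉ R := (Finset.mem_sdiff.mp hx).2
    exact hsep x hxR y0 hy0R
  have hcpos : 1 ≤ (T \ R).card := Finset.card_pos.mpr hTR
  rw [hcd] at hlb
  rw [nsmul_eq_mul] at hub hlb
  have : ((R \ T).card : ℤ) * (g y0 + 1) ≤ ((R \ T).card : ℤ) * g y0 := by
    calc ((R \ T).card : ℤ) * (g y0 + 1) ≤ ∑ j ∈ T \ R, g j := hlb
    _ = ∑ j ∈ R \ T, g j := hdiffsum
    _ ≤ _ := hub
  have hcpos' : (1 : ℤ) ≤ (R \ T).card := by exact_mod_cast hcd ▸ hcpos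
  nlinarith

def intervalR (n s b : ℕ) (hn : 0 < n) : Finset (Fin n) :=
  Finset.image (fun t : Fin b => (⟨(s + (t : ℕ)) % n, Nat.mod_lt _ hn⟩ : Fin n)) Finset.univ

lemma mem_intervalR {n s b : ℕ} (hn : 0 < n) (j : Fin n) :
    j ∈ intervalR n s b hn ↔ ∃ t, t < b ∧ (j : ℕ) = (s + t) % n := by
  unfold intervalR
  simp only [Finset.mem_image, Finset.mem_univ, true_and]
  constructor
  · rintro ⟨t, rfl⟩; exact ⟨t, t.2, rfl⟩
  · rintro ⟨t, ht, hj⟩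
    exact ⟨⟨t, ht⟩, by apply Fin.ext; simp [hj]⟩

lemma card_intervalR {n s b : ℕ} (hn : 0 < n) (hbn : b ≤ n) :
    (intervalR n s b hn).card = b := by
  unfold intervalR
  rw [Finset.card_image_of_injective _ ?_, Finset.card_univ, Fintype.card_fin]
  intro t t' h
  have h1 : (s + (t : ℕ)) % n = (s + (t' : ℕ)) % n := by
    have := congrArg Fin.val h; simpa using this
  have h2 : ((t : ℕ)) % n = ((t' : ℕ)) % n := by
    have := Nat.ModEq.add_left_cancel' s h1
    exact this
  have h3 : (t : ℕ) = (t' : ℕ) := by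
    rwa [Nat.mod_eq_of_lt (lt_of_lt_of_le t.2 hbn), Nat.mod_eq_of_lt (lt_of_lt_of_le t'.2 hbn)] at h2
  exact Fin.ext h3

variable {F : Type*} [Field F]

lemma block_det_ne_zero {m c : ℕ} (u : Fin m → F) (hu : Function.Injective u)
    (hu0 : ∀ x, u x ≠ 0) :
    (Matrix.of fun t x : Fin m => u x ^ (c + (t : ℕ))).det ≠ 0 := by
  have h1 : (Matrix.of fun t x : Fin m => u x ^ (c + (t : ℕ)))
      = Matrix.of (fun t x : Fin m => (fun y => u y ^ c) x * ((Matrix.vandermonde u)ᵀ) t x) := by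
    ext t x
    simp [Matrix.vandermonde, pow_add]
  rw [h1, Matrix.det_mul_row, Matrix.det_transpose]
  apply mul_ne_zero
  · exact Finset.prod_ne_zero_iff.mpr (fun x _ => pow_ne_zero _ (hu0 x))
  · exact (Matrix.det_vandermonde_ne_zero_iff).mpr hu

lemma det_ne_zero_of_submatrix {α β : Type*} [DecidableEq α] [Fintype α] [DecidableEq β]
    [Fintype β] (M : Matrix α α F) (e f : β ≃ α)
    (h : (M.submatrix e f).det ≠ 0) : M.det ≠ 0 := by
  have h1 : M.submatrix e f = (M.submatrix e e).submatrix id ⇑(f.trans e.symm) := by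
    ext i j
    simp [Matrix.submatrix_apply]
  rw [h1, Matrix.det_permute' (f.trans e.symm)] at h
  intro h0
  rw [← Matrix.det_submatrix_equiv_self e M] at h0
  rw [h0, mul_zero] at h
  exact h rfl

lemma mod_add_inj {n s x y : ℕ} (hx : x < n) (hy : y < n)
    (h : (s + x) % n = (s + y) % n) : x = y := by
  have h2 : x % n = y % n := Nat.ModEq.add_left_cancel' s h
  rwa [Nat.mod_eq_of_lt hx, Nat.mod_eq_of_lt hy] at h2

variable {F : Type*} [Field F]

lemma key {n : ℕ} (hn : 0 < n) (b s : ℕ) (hbn : b ≤ n)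
    (ζ : F) (hζ0 : ζ ≠ 0) (hpow : ∀ x y : ℕ, ζ ^ x = ζ ^ y ↔ x % n = y % n)
    (ε : Fin n → Fin 2) (l : Fin n → Fin n)
    (hinj : Function.Injective (fun i => (ε i, l i)))
    (hb : (Finset.univ.filter fun i => ε i = 1).card = b)
    (huniq : ∀ T : Finset (Fin n), T.card = b →
      (∑ j ∈ T, gzE n j) = (∑ j ∈ intervalR n s b hn, gzE n j) → T = intervalR n s b hn) :
    (Matrix.of fun i j : Fin n =>
      (C (ζ ^ ((j : ℕ) * (l i : ℕ))) * X ^ (expE n (ε i) j) : F[X])).det ≠ 0 := by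
  classical
  set R1 : Finset (Fin n) := intervalR n s b hn with hR1def
  have hcardR1 : R1.card = b := card_intervalR hn hbn
  -- the degree functional
  set Fdeg : Finset (Fin n) → ℕ := fun T => ∑ j ∈ T, expE n 1 j + ∑ j ∈ Tᶜ, expE n 0 j with hFdeg
  set D : ℕ := Fdeg R1 with hD
  have StepA : ∀ T : Finset (Fin n),
      (Fdeg T : ℤ) = ∑ j ∈ T, gzE n j + ∑ j : Fin n, ((j : ℕ) : ℤ) := by
    intro T
    have h1 : ∀ j : Fin n, (expE n 1 j : ℤ) = gzE n j + (j : ℕ) := by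
      intro j; unfold expE gzE; norm_num
    have h2 : ∀ j : Fin n, (expE n 0 j : ℤ) = (j : ℕ) := by
      intro j; unfold expE; norm_num
    push_cast [hFdeg]
    rw [Finset.sum_congr rfl (fun j _ => h1 j), Finset.sum_congr rfl (fun j _ => h2 j),
      Finset.sum_add_distrib]
    have := Finset.sum_add_sum_compl T (fun j : Fin n => ((j : ℕ) : ℤ))
    linarith
  have StepB : ∀ T : Finset (Fin n), T.card = b → Fdeg T = D → T = R1 := by
    intro T hT h
    apply huniq T hT
    have hA := StepA T
    have hB := StepA R1
    rw [h] at hA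
    rw [← hD] at hB  -- D = Fdeg R1
    omega
  -- properties of permutations
  have hTcard : ∀ σ : Equiv.Perm (Fin n),
      (Finset.univ.filter fun j => ε (σ j) = 1).card = b := by
    intro σ
    have himg : Finset.image σ (Finset.univ.filter fun j => ε (σ j) = 1)
        = Finset.univ.filter fun i => ε i = 1 := by
      ext i
      simp only [Finset.mem_image, Finset.mem_filter, Finset.mem_univ, true_and]
      constructor
      · rintro ⟨j, hj, rfl⟩; exact hj
      · intro h; exact ⟨σ.symm i, by simpa using h, by simp⟩
    rw [← hb, ← himg, Finset.card_image_of_injective _ σ.injective]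
  have hw : ∀ σ : Equiv.Perm (Fin n),
      ∑ j, expE n (ε (σ j)) j = Fdeg (Finset.univ.filter fun j => ε (σ j) = 1) := by
    intro σ
    rw [hFdeg]
    rw [← Finset.sum_filter_add_sum_filter_not Finset.univ (fun j => ε (σ j) = 1)
      (fun j => expE n (ε (σ j)) j)]
    congr 1
    · apply Finset.sum_congr rfl
      intro j hj
      rw [(Finset.mem_filter.mp hj).2]
    · rw [Finset.compl_filter]
      apply Finset.sum_congr rfl
      intro j hj
      rw [fin2_eq_zero (Finset.mem_filter.mp hj).2]
  have hiff : ∀ σ : Equiv.Perm (Fin n),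
      (∑ j, expE n (ε (σ j)) j = D) ↔ ∀ j, (ε (σ j) = 1 ↔ j ∈ R1) := by
    intro σ
    constructor
    · intro h
      have hT := StepB _ (hTcard σ) ((hw σ) ▸ h)
      intro j
      conv_rhs => rw [← hT]
      simp
    · intro h
      have hT : (Finset.univ.filter fun j => ε (σ j) = 1) = R1 := by
        ext j; simpa using h j
      rw [hw σ, hT]
  -- the coefficient matrix
  set B : Matrix (Fin n) (Fin n) F := Matrix.of fun i j =>
    if (ε i = 1 ↔ j ∈ R1) then ζ ^ ((j : ℕ) * (l i : ℕ)) else 0 with hBdef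
  have StepC : ((Matrix.of fun i j : Fin n =>
      (C (ζ ^ ((j : ℕ) * (l i : ℕ))) * X ^ (expE n (ε i) j) : F[X])).det).coeff D = B.det := by
    rw [Matrix.det_apply, Matrix.det_apply, Polynomial.finset_sum_coeff]
    apply Finset.sum_congr rfl
    intro σ _
    rw [Polynomial.coeff_smul]
    congr 1
    have hprod : (∏ j, (Matrix.of fun i j : Fin n =>
        (C (ζ ^ ((j : ℕ) * (l i : ℕ))) * X ^ (expE n (ε i) j) : F[X])) (σ j) j)
        = C (∏ j : Fin n, ζ ^ ((j : ℕ) * (l (σ j) : ℕ))) * X ^ (∑ j, expE n (ε (σ j)) j) := by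
      rw [map_prod, ← Finset.prod_pow_eq_pow_sum, ← Finset.prod_mul_distrib]
      rfl
    rw [hprod, Polynomial.coeff_C_mul, Polynomial.coeff_X_pow]
    by_cases hall : ∀ j, (ε (σ j) = 1 ↔ j ∈ R1)
    · rw [if_pos ((hiff σ).mpr hall).symm, mul_one]
      apply Finset.prod_congr rfl
      intro j _
      rw [hBdef]
      simp only [Matrix.of_apply]
      rw [if_pos (hall j)]
    · rw [if_neg (fun h => hall ((hiff σ).mp h.symm)), mul_zero]
      obtain ⟨j0, hj0⟩ := not_forall.mp hall
      exact (Finset.prod_eq_zero (Finset.mem_univ j0)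
        (by rw [hBdef]; simp only [Matrix.of_apply]; rw [if_neg hj0])).symm
  -- Step D : det B ≠ 0
  have hcard1 : Fintype.card {i : Fin n // ε i = 1} = b := by
    rw [Fintype.card_subtype]; exact hb
  have hcard0 : Fintype.card {i : Fin n // ¬ ε i = 1} = n - b := by
    rw [Fintype.card_subtype_compl, hcard1, Fintype.card_fin]
  have hcardc1 : Fintype.card {j : Fin n // j ∈ R1} = b := by
    rw [Fintype.card_coe]; exact hcardR1
  have hcardc0 : Fintype.card {j : Fin n // ¬ j ∈ R1} = n - b := by
    rw [Fintype.card_subtype_compl, Fintype.card_coe, Fintype.card_fin, hcardR1]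
  set eR1 : Fin b ≃ {i : Fin n // ε i = 1} := (Fintype.equivFinOfCardEq hcard1).symm with heR1
  set eR0 : Fin (n - b) ≃ {i : Fin n // ¬ ε i = 1} := (Fintype.equivFinOfCardEq hcard0).symm
    with heR0
  have hfC1 : ∀ t : Fin b, (⟨(s + (t : ℕ)) % n, Nat.mod_lt _ hn⟩ : Fin n) ∈ R1 := by
    intro t
    rw [hR1def, mem_intervalR]
    exact ⟨t, t.2, rfl⟩
  set fC1 : Fin b → {j : Fin n // j ∈ R1} :=
    fun t => ⟨⟨(s + (t : ℕ)) % n, Nat.mod_lt _ hn⟩, hfC1 t⟩ with hfC1def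
  have hfC1inj : Function.Injective fC1 := by
    intro t t' h
    have h1 : (s + (t : ℕ)) % n = (s + (t' : ℕ)) % n := congrArg (fun x => (x.1 : Fin n).val) h
    exact Fin.ext (mod_add_inj (lt_of_lt_of_le t.2 hbn) (lt_of_lt_of_le t'.2 hbn) h1)
  have hfC1bij : Function.Bijective fC1 :=
    (Fintype.bijective_iff_injective_and_card fC1).mpr
      ⟨hfC1inj, by rw [Fintype.card_fin, hcardc1]⟩
  set eC1 : Fin b ≃ {j : Fin n // j ∈ R1} := Equiv.ofBijective fC1 hfC1bij with heC1
  have hfC0mem : ∀ t : Fin (n - b),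
      ¬ ((⟨(s + (b + (t : ℕ))) % n, Nat.mod_lt _ hn⟩ : Fin n) ∈ R1) := by
    intro t h
    rw [hR1def, mem_intervalR] at h
    obtain ⟨t', ht', heq⟩ := h
    have hbt : b + (t : ℕ) < n := by have := t.2; omega
    have heq' : (s + (b + (t : ℕ))) % n = (s + t') % n := heq
    have := mod_add_inj (x := b + (t : ℕ)) (y := t') hbt (lt_of_lt_of_le ht' hbn) heq'
    omega
  set fC0 : Fin (n - b) → {j : Fin n // ¬ j ∈ R1} :=
    fun t => ⟨⟨(s + (b + (t : ℕ))) % n, Nat.mod_lt _ hn⟩, hfC0mem t⟩ with hfC0def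
  have hfC0inj : Function.Injective fC0 := by
    intro t t' h
    have h1 : (s + (b + (t : ℕ))) % n = (s + (b + (t' : ℕ))) % n :=
      congrArg (fun x => (x.1 : Fin n).val) h
    have h2 := mod_add_inj (x := b + (t : ℕ)) (y := b + (t' : ℕ))
      (by have := t.2; omega) (by have := t'.2; omega) h1
    exact Fin.ext (by omega)
  have hfC0bij : Function.Bijective fC0 :=
    (Fintype.bijective_iff_injective_and_card fC0).mpr
      ⟨hfC0inj, by rw [Fintype.card_fin, hcardc0]⟩
  set eC0 : Fin (n - b) ≃ {j : Fin n // ¬ j ∈ R1} := Equiv.ofBijective fC0 hfC0bij with heC0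
  set eRow : Fin b ⊕ Fin (n - b) ≃ Fin n :=
    (Equiv.sumCongr eR1 eR0).trans (Equiv.sumCompl fun i => ε i = 1) with heRow
  set eCol : Fin b ⊕ Fin (n - b) ≃ Fin n :=
    (Equiv.sumCongr eC1 eC0).trans (Equiv.sumCompl fun j => j ∈ R1) with heCol
  have StepD : B.det ≠ 0 := by
    apply det_ne_zero_of_submatrix B eRow eCol
    have hblock : B.submatrix eRow eCol = Matrix.fromBlocks
        (Matrix.of fun x t : Fin b =>
          ζ ^ (((s + (t : ℕ)) % n) * ((l (eR1 x).1 : Fin n) : ℕ)))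
        0 0
        (Matrix.of fun x t : Fin (n - b) =>
          ζ ^ (((s + (b + (t : ℕ))) % n) * ((l (eR0 x).1 : Fin n) : ℕ))) := by
      ext x t
      rcases x with x | x <;> rcases t with t | t <;>
        simp only [Matrix.submatrix_apply, heRow, heCol, Equiv.trans_apply,
          Equiv.sumCongr_apply, Sum.map_inl, Sum.map_inr, Equiv.sumCompl_apply_inl,
          Equiv.sumCompl_apply_inr, Matrix.fromBlocks_apply₁₁, Matrix.fromBlocks_apply₁₂,
          Matrix.fromBlocks_apply₂₁, Matrix.fromBlocks_apply₂₂, Matrix.zero_apply, hBdef, Matrix.of_apply,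
          heC1, heC0, Equiv.ofBijective_apply, hfC1def, hfC0def]
      · rw [if_pos (iff_of_true (eR1 x).2 (hfC1 t))]
      · rw [if_neg (fun h => hfC0mem t (h.mp (eR1 x).2))]
      · rw [if_neg (fun h => (eR0 x).2 (h.mpr (hfC1 t)))]
      · rw [if_pos (iff_of_false (eR0 x).2 (hfC0mem t))]
    rw [hblock, Matrix.det_fromBlocks_zero₁₂]
    have hpowmod : ∀ (c : ℕ) (v : ℕ), ζ ^ ((c % n) * v) = (ζ ^ v) ^ c := by
      intro c v
      rw [(hpow _ _).mpr ((Nat.mod_modEq c n).mul_right v), mul_comm, pow_mul]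
    apply mul_ne_zero
    · have hM : (Matrix.of fun x t : Fin b =>
          ζ ^ (((s + (t : ℕ)) % n) * ((l (eR1 x).1 : Fin n) : ℕ)))
          = (Matrix.of fun t x : Fin b =>
              (ζ ^ ((l (eR1 x).1 : Fin n) : ℕ)) ^ (s + (t : ℕ)))ᵀ := by
        ext x t
        simp only [Matrix.of_apply, Matrix.transpose_apply]
        rw [hpowmod]
      rw [hM, Matrix.det_transpose]
      apply block_det_ne_zero
      · intro x y hxy
        have hl : l (eR1 x).1 = l (eR1 y).1 := by
          have h1 := (hpow _ _).mp hxy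
          rw [Nat.mod_eq_of_lt (l _).2, Nat.mod_eq_of_lt (l _).2] at h1
          exact Fin.ext h1
        have : (eR1 x).1 = (eR1 y).1 := by
          apply hinj
          simp only [Prod.mk.injEq]
          exact ⟨(eR1 x).2.trans (eR1 y).2.symm, hl⟩
        exact eR1.injective (Subtype.ext this)
      · intro x; exact pow_ne_zero _ hζ0
    · have hM : (Matrix.of fun x t : Fin (n - b) =>
          ζ ^ (((s + (b + (t : ℕ))) % n) * ((l (eR0 x).1 : Fin n) : ℕ)))
          = (Matrix.of fun t x : Fin (n - b) =>
              (ζ ^ ((l (eR0 x).1 : Fin n) : ℕ)) ^ ((s + b) + (t : ℕ)))ᵀ := by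
        ext x t
        simp only [Matrix.of_apply, Matrix.transpose_apply]
        rw [← Nat.add_assoc]
        rw [hpowmod]
      rw [hM, Matrix.det_transpose]
      apply block_det_ne_zero
      · intro x y hxy
        have hl : l (eR0 x).1 = l (eR0 y).1 := by
          have h1 := (hpow _ _).mp hxy
          rw [Nat.mod_eq_of_lt (l _).2, Nat.mod_eq_of_lt (l _).2] at h1
          exact Fin.ext h1
        have hε : ε (eR0 x).1 = ε (eR0 y).1 :=
          (fin2_eq_zero (eR0 x).2).trans (fin2_eq_zero (eR0 y).2).symm
        have : (eR0 x).1 = (eR0 y).1 := by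
          apply hinj
          simp only [Prod.mk.injEq]
          exact ⟨hε, hl⟩
        exact eR0.injective (Subtype.ext this)
      · intro x; exact pow_ne_zero _ hζ0
  intro h0
  rw [h0] at StepC
  simp only [Polynomial.coeff_zero] at StepC
  exact StepD StepC.symm

lemma poly_det_ne_zero {n : ℕ} (hn2 : 2 < n) (hodd : Odd n)
    (ζ : F) (hζ0 : ζ ≠ 0) (hpow : ∀ x y : ℕ, ζ ^ x = ζ ^ y ↔ x % n = y % n)
    (ε : Fin n → Fin 2) (l : Fin n → Fin n)
    (hinj : Function.Injective (fun i => (ε i, l i))) :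
    (Matrix.of fun i j : Fin n =>
      (C (ζ ^ ((j : ℕ) * (l i : ℕ))) * X ^ (expE n (ε i) j) : F[X])).det ≠ 0 := by
  have hn : 0 < n := by omega
  set b : ℕ := (Finset.univ.filter fun i => ε i = 1).card with hbdef
  have hbn : b ≤ n := by
    rw [hbdef]
    calc (Finset.univ.filter fun i => ε i = 1).card ≤ Finset.univ.card :=
      Finset.card_filter_le _ _
    _ = n := by rw [Finset.card_univ, Fintype.card_fin]
  have hne : 2 * b ≠ n := by
    rcases hodd with ⟨k, hk⟩; omega
  rcases Nat.lt_or_ge (2 * b) n with hcase | hcase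
  · -- minimal configuration, s = n - b
    have hmem : ∀ j : Fin n, j ∈ intervalR n (n - b) b hn ↔ n - b ≤ (j : ℕ) := by
      intro j
      rw [mem_intervalR]
      constructor
      · rintro ⟨t, ht, hj⟩
        rw [Nat.mod_eq_of_lt (by omega)] at hj
        omega
      · intro h
        refine ⟨(j : ℕ) - (n - b), by have := j.2; omega, ?_⟩
        rw [Nat.mod_eq_of_lt (by have := j.2; omega)]
        omega
    apply key hn b (n - b) hbn ζ hζ0 hpow ε l hinj hbdef.symm
    intro T hT hsum
    apply sum_sep_unique (gzE n) _ _ (by rw [hT, card_intervalR hn hbn]) ?_ hsum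
    intro x hx y hy
    rw [hmem] at hx hy
    have hx2 := x.2; have hy2 := y.2
    rw [gzE_val, gzE_val]
    split_ifs <;> omega
  · -- maximal configuration, s = 0
    have hcase' : n < 2 * b := lt_of_le_of_ne hcase (fun h => hne h.symm)
    have hmem : ∀ j : Fin n, j ∈ intervalR n 0 b hn ↔ (j : ℕ) < b := by
      intro j
      rw [mem_intervalR]
      constructor
      · rintro ⟨t, ht, hj⟩
        rw [Nat.zero_add, Nat.mod_eq_of_lt (lt_of_lt_of_le ht hbn)] at hj
        omega
      · intro h
        exact ⟨(j : ℕ), h, by rw [Nat.zero_add, Nat.mod_eq_of_lt j.2]⟩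
    apply key hn b 0 hbn ζ hζ0 hpow ε l hinj hbdef.symm
    intro T hT hsum
    apply sum_sep_unique (fun j => -(gzE n j)) _ _ (by rw [hT, card_intervalR hn hbn]) ?_ ?_
    · intro x hx y hy
      rw [hmem] at hx hy
      have hx2 := x.2; have hy2 := y.2
      simp only [neg_lt_neg_iff]
      rw [gzE_val, gzE_val]
      split_ifs <;> omega
    · rw [Finset.sum_neg_distrib, Finset.sum_neg_distrib, hsum]

lemma natDegree_sign_smul_le {K : Type*} [Field K] {m : Type*} [Fintype m] [DecidableEq m]
    (σ : Equiv.Perm m) (q : Polynomial K) :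
    (Equiv.Perm.sign σ • q).natDegree ≤ q.natDegree := by
  rcases Int.units_eq_one_or (Equiv.Perm.sign σ) with h | h <;> rw [h]
  · rw [one_smul]
  · rw [Units.smul_def, Units.val_neg, Units.val_one, neg_smul, one_smul, natDegree_neg]

set_option maxHeartbeats 1000000 in
lemma li_main (n : ℕ) (hn : 2 < n) (hodd : Odd n) (lam : ℂ)
    (hlam : Transcendental ℚ lam ∨
      (IsAlgebraic (IntermediateField.adjoin ℚ {xi n} : IntermediateField ℚ ℂ) lam ∧
        n ^ 2 - n + 1 ≤
          (minpoly (IntermediateField.adjoin ℚ {xi n} : IntermediateField ℚ ℂ) lam).natDegree))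
    (p : Fin n → Fin 2 × Fin n) (hp : Function.Injective p) :
    LinearIndependent ℂ (fun i : Fin n => lambdaOrbit n lam (p i)) := by
  have hn0 : (0:ℕ) < n := by omega
  set K : IntermediateField ℚ ℂ := IntermediateField.adjoin ℚ {xi n} with hK
  have hprim : IsPrimitiveRoot (xi n) n := Complex.isPrimitiveRoot_exp n (by omega)
  have horder : orderOf (xi n) = n := hprim.eq_orderOf.symm
  have e1 : ∀ x : ℕ, xi n ^ (x % n) = xi n ^ x := by
    intro x
    conv_lhs => rw [show x % n = x % orderOf (xi n) by rw [horder]]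
    exact pow_mod_orderOf (xi n) x
  have hpowC : ∀ x y : ℕ, xi n ^ x = xi n ^ y ↔ x % n = y % n := by
    intro x y
    constructor
    · intro h
      exact hprim.pow_inj (Nat.mod_lt _ hn0) (Nat.mod_lt _ hn0)
        ((e1 x).trans (h.trans (e1 y).symm))
    · intro h
      rw [← e1 x, h, e1 y]
  have hximem : xi n ∈ K := IntermediateField.mem_adjoin_simple_self ℚ (xi n)
  set ξK : K := ⟨xi n, hximem⟩ with hξK
  have hξcoe : ∀ m : ℕ, ((ξK ^ m : K) : ℂ) = xi n ^ m := fun m =>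
    SubmonoidClass.coe_pow ξK m
  have hζ0K : ξK ≠ 0 := by
    intro h
    have h2 : xi n = 0 := by
      have := congrArg (Subtype.val) h
      simpa [hξK] using this
    exact Complex.exp_ne_zero _ h2
  have hpowK : ∀ x y : ℕ, ξK ^ x = ξK ^ y ↔ x % n = y % n := by
    intro x y
    rw [← Subtype.coe_inj, hξcoe, hξcoe]
    exact hpowC x y
  have hinj : Function.Injective (fun i : Fin n => ((p i).1, (p i).2)) := by
    have hpe : (fun i : Fin n => ((p i).1, (p i).2)) = p := funext fun i => rfl
    rw [hpe]; exact hp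
  have hQ : (Matrix.of fun i j : Fin n =>
      (C (ξK ^ ((j : ℕ) * ((p i).2 : ℕ))) * X ^ (expE n (p i).1 j) : Polynomial K)).det ≠ 0 :=
    poly_det_ne_zero hn hodd ξK hζ0K hpowK (fun i => (p i).1) (fun i => (p i).2) hinj
  set Q : Polynomial K := (Matrix.of fun i j : Fin n =>
      (C (ξK ^ ((j : ℕ) * ((p i).2 : ℕ))) * X ^ (expE n (p i).1 j) : Polynomial K)).det with hQdef
  have expE_le : ∀ (t : Fin 2) (j : Fin n), expE n t j ≤ n - 1 := by
    intro t j
    unfold expE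
    have hj := j.2
    split_ifs
    · omega
    · have := Nat.mod_lt (n - (j:ℕ)) hn0; omega
  have hdeg : Q.natDegree ≤ n * n - n := by
    rw [hQdef, Matrix.det_apply]
    apply Polynomial.natDegree_sum_le_of_forall_le
    intro σ _
    apply le_trans (natDegree_sign_smul_le σ _)
    apply le_trans (Polynomial.natDegree_prod_le _ _)
    calc ∑ j : Fin n, (((Matrix.of fun i j : Fin n =>
          (C (ξK ^ ((j : ℕ) * ((p i).2 : ℕ))) * X ^ (expE n (p i).1 j) : Polynomial K))
            (σ j) j).natDegree)
        ≤ ∑ _j : Fin n, (n - 1) := by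
          apply Finset.sum_le_sum
          intro j _
          exact le_trans (Polynomial.natDegree_C_mul_X_pow_le _ _) (expE_le _ _)
      _ = n * (n - 1) := by
          rw [Finset.sum_const, Finset.card_univ, Fintype.card_fin, smul_eq_mul]
      _ ≤ n * n - n := by
          have h2 : n - 1 + 1 = n := by omega
          have h : n * n = n * (n - 1) + n := by
            calc n * n = n * (n - 1 + 1) := by rw [h2]
              _ = n * (n - 1) + n := Nat.mul_succ n (n - 1)
          omega
  set A : Matrix (Fin n) (Fin n) ℂ := Matrix.of fun i j : Fin n => lambdaOrbit n lam (p i) j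
    with hA
  set f : Polynomial K →+* ℂ := (Polynomial.aeval lam : Polynomial K →ₐ[K] ℂ).toRingHom
    with hf
  have hmap : f Q = A.det := by
    rw [hQdef, RingHom.map_det]
    congr 1
    ext i j
    simp only [RingHom.mapMatrix_apply, Matrix.map_apply, Matrix.of_apply, hf,
      AlgHom.toRingHom_eq_coe, RingHom.coe_coe, hA]
    rw [_root_.map_mul, Polynomial.aeval_C, Polynomial.aeval_X_pow]
    rw [IntermediateField.algebraMap_apply, hξcoe]
    unfold lambdaOrbit
    congr 1
    by_cases h : (p i).1 = 0 <;> simp [expE, h]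
  have hdetA : A.det ≠ 0 := by
    intro h0
    have hz : Polynomial.aeval lam Q = 0 := by
      have : f Q = 0 := by rw [hmap, h0]
      exact this
    rcases hlam with htr | ⟨halg, hdeg'⟩
    · have halgK : IsAlgebraic K lam := ⟨Q, hQ, hz⟩
      have hxiInt : IsIntegral ℚ (xi n) := by
        refine ⟨X ^ n - C 1, Polynomial.monic_X_pow_sub_C 1 (by omega), ?_⟩
        rw [Polynomial.eval₂_sub, Polynomial.eval₂_X_pow, Polynomial.eval₂_C]
        simp [hprim.pow_eq_one]
      haveI halgQK : Algebra.IsAlgebraic ℚ K := by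
        rw [hK]
        exact IntermediateField.isAlgebraic_adjoin (fun x hx => by
          rw [Set.mem_singleton_iff] at hx
          subst hx
          exact hxiInt)
      haveI : Algebra.IsIntegral ℚ K := Algebra.IsAlgebraic.isIntegral
      have hint : IsIntegral ℚ lam := isIntegral_trans lam halgK.isIntegral
      exact htr hint.isAlgebraic
    · have hdvd : minpoly K lam ∣ Q := minpoly.dvd K lam hz
      have hle : (minpoly K lam).natDegree ≤ Q.natDegree :=
        Polynomial.natDegree_le_of_dvd hdvd hQ
      have hsq : n ^ 2 = n * n := pow_two n
      omega
  have hunit : IsUnit A := (Matrix.isUnit_iff_isUnit_det A).mpr hdetA.isUnit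
  exact Matrix.linearIndependent_rows_iff_isUnit.mpr hunit

set_option maxHeartbeats 1000000 in

theorem lambda_orbit_full_spark_of_transcendental_or_large_degree
    (n : ℕ) (hn : 2 < n) (hodd : Odd n) (lam : ℂ)
    (hlam : Transcendental ℚ lam ∨
      (IsAlgebraic (IntermediateField.adjoin ℚ {xi n} : IntermediateField ℚ ℂ) lam ∧
        n ^ 2 - n + 1 ≤
          (minpoly (IntermediateField.adjoin ℚ {xi n} : IntermediateField ℚ ℂ) lam).natDegree)) :
    IsFullSpark n (lambdaOrbit n lam) := by
  intro S hS
  let e : {x // x ∈ S} ≃ Fin n := S.equivFin.trans (finCongr hS)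
  set p : Fin n → Fin 2 × Fin n := fun i => ((e.symm i : {x // x ∈ S}) : Fin 2 × Fin n) with hp
  have hpinj : Function.Injective p := fun i j h => by
    have := e.symm.injective (Subtype.ext h)
    exact this
  have hLI : LinearIndependent ℂ (fun i : Fin n => lambdaOrbit n lam (p i)) :=
    li_main n hn hodd lam hlam p hpinj
  have heq : (fun x : {x // x ∈ S} => lambdaOrbit n lam x.1)
      = (fun i : Fin n => lambdaOrbit n lam (p i)) ∘ e := by
    funext x
    simp [hp]
  rw [heq]
  exact (linearIndependent_equiv e).mpr hLI
end

section
/- Let n > 2 be a natural number, ξ = exp(2πi/n), 0 < m < n, s = n − m. Let l_0, …, l_{m−1} be integers that are pairwise distinct modulo n, and j_0, …, j_{s−1} integers that are pairwise distinct modulo n. Let A₁(t) be the m×m matrix with entries A₁(t)_{a,b} = ξ^{b·l_a} t^b (0 ≤ a,b ≤ m−1) and A₄(t) the s×s matrix with entries A₄(t)_{a,c} = ξ^{(m+c)·j_a} t^{n−m−c} (0 ≤ a,c ≤ s−1). Set C = (∏_{a=0}^{s−1} ξ^{m·j_a}) · (∏_{0 ≤ k < ℓ ≤ s−1} (ξ^{j_ℓ}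 − ξ^{j_k})) · (∏_{0 ≤ k < j ≤ m−1} (ξ^{l_j} − ξ^{l_k})) and κ(n,m) = m(m−1)/2 + (n−m)(n−m+1)/2. Then det A₁(t) · det A₄(t) = C·t^{κ(n,m)} and C ≠ 0; in particular det A₁(t) · det A₄(t) is a nonzero monomial in ℂ[t]. -/
open Polynomial

lemma prod_pairs_aux {ι M : Type*} [Fintype ι] [LinearOrder ι] [LocallyFiniteOrderTop ι]
    [CommMonoid M] (f : ι → ι → M) :
    ∏ p ∈ Finset.univ.filter (fun p : ι × ι => p.1 < p.2), f p.1 p.2 =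
      ∏ i, ∏ j ∈ Finset.Ioi i, f i j := by
  rw [Finset.prod_filter, ← Finset.univ_product_univ, Finset.prod_product]
  refine Finset.prod_congr rfl fun i _ => ?_
  rw [← Finset.filter_lt_eq_Ioi, Finset.prod_filter]

lemma sum_aux (s : ℕ) : ∑ c ∈ Finset.range s, (s - c) = s * (s + 1) / 2 := by
  rw [← Finset.sum_range_reflect]
  have : ∀ jj ∈ Finset.range s, s - (s - 1 - jj) = jj + 1 := fun jj hj => by
    have := Finset.mem_range.mp hj; omega
  rw [Finset.sum_congr rfl this]
  have h := Finset.sum_range_id (s + 1)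
  rw [Finset.sum_range_succ'] at h
  simp only [add_zero] at h
  rw [h, Nat.add_sub_cancel, mul_comm]

theorem det_A1_mul_det_A4 (n : ℕ) (hn : 2 < n) (m : ℕ) (hm0 : 0 < m) (hm : m < n)
    (l : Fin m → ℤ) (j : Fin (n - m) → ℤ)
    (hl : ∀ a b : Fin m, a ≠ b → ((l a : ZMod n) ≠ (l b : ZMod n)))
    (hj : ∀ a b : Fin (n - m), a ≠ b → ((j a : ZMod n) ≠ (j b : ZMod n)))
    (Cval : ℂ)
    (hC : Cval = (∏ a, xi n ^ ((m : ℤ) * j a)) *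
        (∏ p ∈ Finset.univ.filter (fun p : Fin (n - m) × Fin (n - m) => p.1 < p.2),
          (xi n ^ j p.2 - xi n ^ j p.1)) *
        (∏ p ∈ Finset.univ.filter (fun p : Fin m × Fin m => p.1 < p.2),
          (xi n ^ l p.2 - xi n ^ l p.1))) :
    (Matrix.of fun a b : Fin m =>
        (Polynomial.C (xi n ^ (((b : ℕ) : ℤ) * l a)) * X ^ (b : ℕ) : ℂ[X])).det *
      (Matrix.of fun a c : Fin (n - m) =>
        (Polynomial.C (xi n ^ (((m : ℤ) + ((c : ℕ) : ℤ)) * j a)) * X ^ (n - m - (c : ℕ)) : ℂ[X])).det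
      = Polynomial.C Cval * X ^ (m * (m - 1) / 2 + (n - m) * (n - m + 1) / 2)
      ∧ Cval ≠ 0 := by
  have hξ0 : xi n ≠ 0 := Complex.exp_ne_zero _
  have hprim : IsPrimitiveRoot (xi n) n := Complex.isPrimitiveRoot_exp n (by omega)
  -- distinctness of powers
  have key : ∀ (a b : ℤ), xi n ^ a = xi n ^ b → (a : ZMod n) = (b : ZMod n) := by
    intro a b h
    have h1 : xi n ^ (a - b) = 1 := by
      rw [zpow_sub₀ hξ0, h, div_self (zpow_ne_zero _ hξ0)]
    have hd : (n : ℤ) ∣ a - b := (hprim.zpow_eq_one_iff_dvd _).mp h1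
    have := (ZMod.intCast_zmod_eq_zero_iff_dvd _ n).mpr hd
    push_cast at this
    exact sub_eq_zero.mp this
  -- A1 decomposition
  have hA1 : (Matrix.of fun a b : Fin m =>
        (Polynomial.C (xi n ^ (((b : ℕ) : ℤ) * l a)) * X ^ (b : ℕ) : ℂ[X]))
      = ((Matrix.vandermonde fun a => xi n ^ l a).map (Polynomial.C : ℂ → ℂ[X])) *
        Matrix.diagonal (fun b : Fin m => (X : ℂ[X]) ^ (b : ℕ)) := by
    ext a b
    rw [Matrix.mul_diagonal]
    simp only [Matrix.of_apply, Matrix.map_apply, Matrix.vandermonde_apply]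
    congr 2
    rw [← zpow_natCast (xi n ^ l a), ← zpow_mul, mul_comm]
  have hA4 : (Matrix.of fun a c : Fin (n - m) =>
        (Polynomial.C (xi n ^ (((m : ℤ) + ((c : ℕ) : ℤ)) * j a)) * X ^ (n - m - (c : ℕ)) : ℂ[X]))
      = (((Matrix.diagonal fun a : Fin (n - m) => xi n ^ ((m : ℤ) * j a)) *
          Matrix.vandermonde fun a => xi n ^ j a).map (Polynomial.C : ℂ → ℂ[X])) *
        Matrix.diagonal (fun c : Fin (n - m) => (X : ℂ[X]) ^ (n - m - (c : ℕ))) := by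
    ext a c
    rw [Matrix.mul_diagonal]
    simp only [Matrix.of_apply, Matrix.map_apply, Matrix.diagonal_mul,
      Matrix.vandermonde_apply]
    congr 2
    rw [← zpow_natCast (xi n ^ j a), ← zpow_mul, ← zpow_add₀ hξ0, add_mul, mul_comm ((c:ℤ)) (j a)]
  have hdet1 : ((Matrix.vandermonde fun a => xi n ^ l a).map
      (Polynomial.C : ℂ → ℂ[X])).det = Polynomial.C
      (∏ p ∈ Finset.univ.filter (fun p : Fin m × Fin m => p.1 < p.2),
        (xi n ^ l p.2 - xi n ^ l p.1)) := by
    rw [show ((Matrix.vandermonde fun a => xi n ^ l a).map (Polynomial.C : ℂ → ℂ[X]))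
        = (Polynomial.C : ℂ →+* ℂ[X]).mapMatrix (Matrix.vandermonde fun a => xi n ^ l a) from rfl,
      ← RingHom.map_det, Matrix.det_vandermonde,
      ← prod_pairs_aux fun a b => xi n ^ l b - xi n ^ l a]
  have hdet4 : ((((Matrix.diagonal fun a : Fin (n - m) => xi n ^ ((m : ℤ) * j a)) *
          Matrix.vandermonde fun a => xi n ^ j a).map (Polynomial.C : ℂ → ℂ[X]))).det
      = Polynomial.C ((∏ a, xi n ^ ((m : ℤ) * j a)) *
        ∏ p ∈ Finset.univ.filter (fun p : Fin (n - m) × Fin (n - m) => p.1 < p.2),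
          (xi n ^ j p.2 - xi n ^ j p.1)) := by
    rw [show (((Matrix.diagonal fun a : Fin (n - m) => xi n ^ ((m : ℤ) * j a)) *
          Matrix.vandermonde fun a => xi n ^ j a).map (Polynomial.C : ℂ → ℂ[X]))
        = (Polynomial.C : ℂ →+* ℂ[X]).mapMatrix _ from rfl,
      ← RingHom.map_det, Matrix.det_mul, Matrix.det_diagonal, Matrix.det_vandermonde,
      ← prod_pairs_aux fun a b => xi n ^ j b - xi n ^ j a, map_mul]
  constructor
  · rw [hA1, hA4, Matrix.det_mul, Matrix.det_mul, hdet1, hdet4,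
      Matrix.det_diagonal, Matrix.det_diagonal,
      Finset.prod_pow_eq_pow_sum, Finset.prod_pow_eq_pow_sum]
    have e1 : ∑ b : Fin m, (b : ℕ) = m * (m - 1) / 2 := by
      rw [Fin.sum_univ_eq_sum_range (fun i => i) m, Finset.sum_range_id]
    have e2 : ∑ c : Fin (n - m), (n - m - (c : ℕ)) = (n - m) * (n - m + 1) / 2 := by
      rw [Fin.sum_univ_eq_sum_range (fun i => n - m - i) (n - m), sum_aux]
    rw [e1, e2, hC, pow_add]
    simp only [map_mul]
    ring
  · rw [hC]
    have hne : ∀ (a b : ℤ), (a : ZMod n) ≠ (b : ZMod n) → xi n ^ a - xi n ^ b ≠ 0 := by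
      intro a b hab h
      exact hab (key a b (sub_eq_zero.mp h))
    refine mul_ne_zero (mul_ne_zero ?_ ?_) ?_
    · exact Finset.prod_ne_zero_iff.mpr fun a _ => zpow_ne_zero _ hξ0
    · refine Finset.prod_ne_zero_iff.mpr fun p hp => ?_
      have hlt : p.1 < p.2 := (Finset.mem_filter.mp hp).2
      exact hne _ _ (fun h => hj p.2 p.1 (ne_of_gt hlt) h)
    · refine Finset.prod_ne_zero_iff.mpr fun p hp => ?_
      have hlt : p.1 < p.2 := (Finset.mem_filter.mp hp).2
      exact hne _ _ (fun h => hl p.2 p.1 (ne_of_gt hlt) h)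
end

section
/- Let n > 2 be an odd natural number, ξ = exp(2πi/n), 0 < m < n, s = n − m, and ι(c) = (n−c) mod n. Let l_0, …, l_{m−1} be integers pairwise distinct modulo n and j_0, …, j_{s−1} integers pairwise distinct modulo n. Let S_t be the n×n matrix over ℂ[t] whose rows are: for 0 ≤ a ≤ m−1, (S_t)_{a,c} = ξ^{c·l_a} t^c, and for 0 ≤ b ≤ s−1, (S_t)_{m+b,c} = ξ^{c·j_b} t^{ι(c)}, where 0 ≤ c ≤ n−1. For a subset p ⊆ {0,…,n−1} with |p| = m, let D(p) = det(S_t(rows {0,…,m−1}, columns p)) · det(S_t(rows {m,…,n−1}, columns {0,…,n−1}∖p)), where the submatrices keep the induced orderings of rows and columns. Set C = (∏_{a=0}^{s−1} ξ^{m·j_a}) · (∏_{0 ≤ k < ℓ ≤ s−1} (ξ^{j_ℓ} − ξ^{j_k})) · (∏_{0 ≤ k < j ≤ m−1} (ξ^{l_j} − ξ^{l_k})) and κ(n,m) = m(m−1)/2 + (n−m)(n−m+1)/2. Then D(p) = C·t^{κ(n,m)} if and only if p = {0,1,…,m−1}. -/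
open Polynomial

lemma xi_ne_zero (n : ℕ) : xi n ≠ 0 := Complex.exp_ne_zero _

lemma xi_prim (n : ℕ) (hn : n ≠ 0) : IsPrimitiveRoot (xi n) n := by
  simpa [xi] using Complex.isPrimitiveRoot_exp n hn

lemma xi_zpow_inj {n : ℕ} (hn : n ≠ 0) {x y : ℤ} (h : xi n ^ x = xi n ^ y) :
    (x : ZMod n) = (y : ZMod n) := by
  have hp := xi_prim n hn
  have h1 : xi n ^ (x - y) = 1 := by
    rw [zpow_sub₀ (xi_ne_zero n), h, div_self (zpow_ne_zero _ (xi_ne_zero n))]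
  have h2 := (hp.zpow_eq_one_iff_dvd _).mp h1
  have h3 : ((x - y : ℤ) : ZMod n) = 0 := (ZMod.intCast_zmod_eq_zero_iff_dvd _ _).mpr h2
  rwa [Int.cast_sub, sub_eq_zero] at h3

lemma det_C_mul_X_pow {k : ℕ} (A : Matrix (Fin k) (Fin k) ℂ) (e : Fin k → ℕ) :
    (Matrix.of fun i c => (C (A i c) : ℂ[X]) * X ^ e c).det
      = C A.det * X ^ (∑ c, e c) := by
  have h1 : (Matrix.of fun i c => (C (A i c) : ℂ[X]) * X ^ e c)
      = Matrix.of fun i c => (X ^ e c) * (A.map C) i c := by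
    ext i c
    rw [Matrix.of_apply, Matrix.of_apply, Matrix.map_apply, mul_comm]
  rw [h1, Matrix.det_mul_row, Finset.prod_pow_eq_pow_sum]
  rw [show (A.map ⇑C).det = C A.det from (RingHom.map_det C A).symm]
  ring

lemma C_mul_X_pow_eq_iff {a b : ℂ} (hb : b ≠ 0) {e f : ℕ} :
    (C a * X ^ e : ℂ[X]) = C b * X ^ f ↔ a = b ∧ e = f := by
  constructor
  · intro h
    have ha : a ≠ 0 := by
      rintro rfl
      simp only [map_zero, zero_mul] at h
      exact (mul_ne_zero (C_ne_zero.mpr hb) (pow_ne_zero f X_ne_zero)) h.symm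
    have hef : e = f := by
      have h2 := congrArg natDegree h
      rwa [natDegree_C_mul_X_pow _ _ ha, natDegree_C_mul_X_pow _ _ hb] at h2
    subst hef
    exact ⟨C_injective (mul_right_cancel₀ (pow_ne_zero e X_ne_zero) h), rfl⟩
  · rintro ⟨rfl, rfl⟩; rfl

lemma prod_pairs_eq {k : ℕ} (f : Fin k → Fin k → ℂ) :
    (∏ q ∈ Finset.univ.filter (fun q : Fin k × Fin k => q.1 < q.2), f q.1 q.2)
      = ∏ i, ∏ j ∈ Finset.Ioi i, f i j := by
  rw [Finset.prod_filter, ← Finset.univ_product_univ, Finset.prod_product]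
  refine Finset.prod_congr rfl fun i _ => ?_
  rw [← Finset.prod_filter]
  refine Finset.prod_congr ?_ fun _ _ => rfl
  ext x; simp

lemma sum_orderIso {α : Type*} [AddCommMonoid α] {n m : ℕ} (p : Finset (Fin n)) (hp : p.card = m)
    (f : Fin n → α) : ∑ i : Fin m, f (p.orderIsoOfFin hp i : Fin n) = ∑ c ∈ p, f c := by
  rw [← Finset.sum_coe_sort p f]
  exact Fintype.sum_equiv (p.orderIsoOfFin hp).toEquiv _ _ (fun i => rfl)

lemma le_of_fin_strictMono {m : ℕ} {g : Fin m → ℕ} (hg : StrictMono g) (i : Fin m) :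
    (i : ℕ) ≤ g i := by
  induction' h : (i : ℕ) with k ih generalizing i
  · omega
  · have hk : k < m := by omega
    have h1 := hg (show (⟨k, hk⟩ : Fin m) < i by simp [Fin.lt_def, h])
    have h2 := ih ⟨k, hk⟩ rfl
    omega

lemma sum_sub_range (s : ℕ) : ∑ k ∈ Finset.range s, (s - k) = s * (s + 1) / 2 := by
  have h1 : ∑ k ∈ Finset.range s, (s - k) = ∑ k ∈ Finset.range s, (k + 1) := by
    have := Finset.sum_range_reflect (fun k => k + 1) s
    rw [← this]
    refine Finset.sum_congr rfl fun k hk => ?_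
    simp only [Finset.mem_range] at hk
    omega
  rw [h1, Finset.sum_add_distrib, Finset.sum_const, Finset.card_range, smul_eq_mul, mul_one]
  have h2 := Finset.sum_range_id_mul_two s
  rcases s with _ | t
  · simp
  · have h3 : (t + 1) * (t + 1 + 1) = (∑ i ∈ Finset.range (t+1), i) * 2 + (t+1) * 2 := by
      rw [h2]
      have h4 : t + 1 - 1 = t := by omega
      rw [h4]; ring
    omega


lemma orderIso_initial {n m : ℕ} (hm : m ≤ n)
    (hp : (Finset.univ.filter (fun c : Fin n => (c : ℕ) < m)).card = m) (i : Fin m) :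
    (((Finset.univ.filter (fun c : Fin n => (c : ℕ) < m)).orderIsoOfFin hp i : Fin n) : ℕ)
      = (i : ℕ) := by
  have h := Finset.orderEmbOfFin_unique hp (f := fun i : Fin m => Fin.castLE hm i)
      (fun i => by simp [Fin.castLE]) (Fin.strictMono_castLE hm)
  rw [Finset.coe_orderIsoOfFin_apply, ← h]
  rfl

lemma orderIso_compl {n m : ℕ} (hm : m < n)
    (hp : ((Finset.univ.filter (fun c : Fin n => (c : ℕ) < m))ᶜ).card = n - m) (i : Fin (n - m)) :
    ((((Finset.univ.filter (fun c : Fin n => (c : ℕ) < m))ᶜ).orderIsoOfFin hp i : Fin n) : ℕ)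
      = m + (i : ℕ) := by
  have h := Finset.orderEmbOfFin_unique hp
      (f := fun i : Fin (n - m) => (⟨m + (i : ℕ), by have := i.isLt; omega⟩ : Fin n))
      (fun i => by simp) (fun a b hab => by simp only [Fin.lt_def] at *; omega)
  rw [Finset.coe_orderIsoOfFin_apply, ← h]
 

lemma exponent_eq_imp {n m : ℕ} (hn : 2 < n) (hodd : Odd n) (hm0 : 0 < m) (hm : m < n)
    (p : Finset (Fin n)) (hp : p.card = m)
    (hE : (∑ c ∈ p, (c : ℕ)) + (∑ c ∈ pᶜ, (n - (c : ℕ)) % n)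
        = m * (m - 1) / 2 + (n - m) * (n - m + 1) / 2) :
    p = Finset.univ.filter (fun c : Fin n => (c : ℕ) < m) := by
  have hcard : pᶜ.card = n - m := by rw [Finset.card_compl, hp, Fintype.card_fin]
  set T := ∑ c ∈ p, (c : ℕ) with hT
  set U := ∑ c ∈ pᶜ, (c : ℕ) with hU
  set E2 := ∑ c ∈ pᶜ, (n - (c : ℕ)) % n with hE2
  have hTU : (T + U) * 2 = n * (n - 1) := by
    rw [hT, hU, Finset.sum_add_sum_compl]
    rw [show ∑ c : Fin n, (c : ℕ) = ∑ i ∈ Finset.range n, i from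
      Fin.sum_univ_eq_sum_range (fun i => i) n]
    exact Finset.sum_range_id_mul_two n
  have hevm : Even (m * (m - 1)) := by
    rcases m with _ | t
    · simp
    · simpa [Nat.mul_comm] using Nat.even_mul_succ_self t
  have hevs : Even ((n - m) * (n - m + 1)) := Nat.even_mul_succ_self _
  have hK2 : (m * (m - 1) / 2 + (n - m) * (n - m + 1) / 2) * 2
      = m * (m - 1) + (n - m) * (n - m + 1) := by
    obtain ⟨u, hu⟩ := hevm
    obtain ⟨v, hv⟩ := hevs
    omega
  have hid : ((m : ℤ) * ((m : ℤ) - 1)) + (((n : ℤ) - m) * (((n : ℤ) - m) + 1))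
      + (n : ℤ) * ((n : ℤ) - 1) = 2 * ((m : ℤ) * ((m : ℤ) - 1)) + 2 * (((n : ℤ) - m) * n) := by
    ring
  have hm1 : (1 : ℕ) ≤ m := hm0
  have hn1 : (1 : ℕ) ≤ n := by omega
  have hA : ((T : ℤ) + E2) * 2 = (m : ℤ) * ((m : ℤ) - 1)
      + ((n : ℤ) - m) * (((n : ℤ) - m) + 1) := by
    have h1 : (T + E2) * 2 = m * (m - 1) + (n - m) * (n - m + 1) := by rw [hE, hK2]
    have h2 := congrArg (fun x : ℕ => (x : ℤ)) h1
    push_cast [Nat.cast_sub hm.le, Nat.cast_sub hm1] at h2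
    linarith
  have hCz : ((T : ℤ) + U) * 2 = (n : ℤ) * ((n : ℤ) - 1) := by
    have h2 := congrArg (fun x : ℕ => (x : ℤ)) hTU
    push_cast [Nat.cast_sub hn1] at h2
    linarith
  have h2T : T * 2 = m * (m - 1) := by
    by_cases h0 : (⟨0, by omega⟩ : Fin n) ∈ p
    · have hsum2 : E2 + U = (n - m) * n := by
        rw [hE2, hU, ← Finset.sum_add_distrib]
        have hterm : ∀ c ∈ pᶜ, (n - (c : ℕ)) % n + (c : ℕ) = n := by
          intro c hc
          have hc0 : (c : ℕ) ≠ 0 := by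
            intro hh
            exact (Finset.mem_compl.mp hc)
              (by rwa [show c = (⟨0, by omega⟩ : Fin n) from Fin.ext hh])
          have hcn := c.isLt
          rw [Nat.mod_eq_of_lt (by omega)]
          omega
        rw [Finset.sum_congr rfl hterm, Finset.sum_const, hcard, smul_eq_mul]
      have hB : ((E2 : ℤ) + U) * 2 = (((n : ℤ) - m) * n) * 2 := by
        have h2 := congrArg (fun x : ℕ => (x : ℤ)) hsum2
        push_cast [Nat.cast_sub hm.le] at h2
        linarith
      have hgoal : (T : ℤ) * 2 = (m : ℤ) * ((m : ℤ) - 1) := by linarith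
      have : ((T * 2 : ℕ) : ℤ) = ((m * (m - 1) : ℕ) : ℤ) := by
        push_cast [Nat.cast_sub hm1]
        linarith
      exact_mod_cast this
    · exfalso
      have h0c : (⟨0, by omega⟩ : Fin n) ∈ pᶜ := Finset.mem_compl.mpr h0
      have e2' : E2 = ∑ c ∈ pᶜ.erase ⟨0, by omega⟩, (n - (c : ℕ)) % n := by
        rw [hE2, ← Finset.sum_erase_add _ _ h0c]
        simp
      have u' : U = ∑ c ∈ pᶜ.erase ⟨0, by omega⟩, (c : ℕ) := by
        rw [hU, ← Finset.sum_erase_add _ _ h0c]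
        simp
      have hcard' : (pᶜ.erase (⟨0, by omega⟩ : Fin n)).card = n - m - 1 := by
        rw [Finset.card_erase_of_mem h0c, hcard]
      have hsum2 : E2 + U = (n - m - 1) * n := by
        rw [e2', u', ← Finset.sum_add_distrib]
        have hterm : ∀ c ∈ pᶜ.erase (⟨0, by omega⟩ : Fin n),
            (n - (c : ℕ)) % n + (c : ℕ) = n := by
          intro c hc
          have hc0 : (c : ℕ) ≠ 0 := by
            intro hh
            exact (Finset.ne_of_mem_erase hc) (Fin.ext hh)
          have hcn := c.isLt
          rw [Nat.mod_eq_of_lt (by omega)]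
          omega
        rw [Finset.sum_congr rfl hterm, Finset.sum_const, hcard', smul_eq_mul]
      have hB : ((E2 : ℤ) + U) * 2 = (((n : ℤ) - m - 1) * n) * 2 := by
        have h2 := congrArg (fun x : ℕ => (x : ℤ)) hsum2
        have hnm1 : (1 : ℕ) ≤ n - m := by omega
        push_cast [Nat.cast_sub hm.le, Nat.cast_sub hnm1] at h2
        linarith
      have hgoal : (T : ℤ) * 2 = (m : ℤ) * ((m : ℤ) - 1) + n := by linarith
      obtain ⟨u, hu⟩ := hevm
      obtain ⟨v, hv⟩ := hodd
      have hu' : ((m * (m - 1) : ℕ) : ℤ) = (m : ℤ) * ((m : ℤ) - 1) := by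
        push_cast [Nat.cast_sub hm1]; ring
      rw [← hu'] at hgoal
      have : ((m * (m - 1) : ℕ) : ℤ) = ((u : ℤ) + u) := by exact_mod_cast hu
      rw [this] at hgoal
      have hv' : (n : ℤ) = 2 * v + 1 := by exact_mod_cast hv
      rw [hv'] at hgoal
      omega
  have hmono : StrictMono (fun i : Fin m => ((p.orderIsoOfFin hp i : Fin n) : ℕ)) := by
    intro a b hab
    exact (p.orderIsoOfFin hp).strictMono hab
  have hsum : ∑ i : Fin m, ((p.orderIsoOfFin hp i : Fin n) : ℕ) = T :=
    sum_orderIso p hp (fun c => (c : ℕ))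
  have hsumi : (∑ i : Fin m, (i : ℕ)) * 2 = m * (m - 1) := by
    rw [Fin.sum_univ_eq_sum_range (fun i => i) m]
    exact Finset.sum_range_id_mul_two m
  have hsum_eq : (∑ i : Fin m, (i : ℕ)) = ∑ i : Fin m,
      ((p.orderIsoOfFin hp i : Fin n) : ℕ) := by
    omega
  have heq := (Finset.sum_eq_sum_iff_of_le
    (fun i _ => le_of_fin_strictMono hmono i)).mp hsum_eq
  ext c
  simp only [Finset.mem_filter, Finset.mem_univ, true_and]
  constructor
  · intro hc
    set x : {y // y ∈ p} := ⟨c, hc⟩ with hx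
    have h1 : p.orderIsoOfFin hp ((p.orderIsoOfFin hp).symm x) = x :=
      (p.orderIsoOfFin hp).apply_symm_apply x
    have h2 := heq ((p.orderIsoOfFin hp).symm x) (Finset.mem_univ _)
    rw [h1] at h2
    have h3 := ((p.orderIsoOfFin hp).symm x).isLt
    have h4 : ((x : Fin n) : ℕ) = (c : ℕ) := rfl
    omega
  · intro hc
    have h2 := heq ⟨(c : ℕ), hc⟩ (Finset.mem_univ _)
    have h3 : (p.orderIsoOfFin hp ⟨(c : ℕ), hc⟩ : Fin n) ∈ p := (p.orderIsoOfFin hp _).2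
    have h2' : (c : ℕ) = ((p.orderIsoOfFin hp ⟨(c : ℕ), hc⟩ : Fin n) : ℕ) := by simpa using h2
    have h4 : (p.orderIsoOfFin hp ⟨(c : ℕ), hc⟩ : Fin n) = c := Fin.ext (by omega)
    rwa [h4] at h3

lemma C_mul_X_pow_mul (a b : ℂ) (e f : ℕ) :
    (C a * X ^ e : ℂ[X]) * (C b * X ^ f) = C (a * b) * X ^ (e + f) := by
  rw [map_mul, pow_add]; ring

theorem laplace_term_eq_iff_initial_segment
    (n : ℕ) (hn : 2 < n) (hodd : Odd n) (m : ℕ) (hm0 : 0 < m) (hm : m < n)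
    (l : Fin m → ℤ) (j : Fin (n - m) → ℤ)
    (hl : ∀ a b : Fin m, a ≠ b → ((l a : ZMod n) ≠ (l b : ZMod n)))
    (hj : ∀ a b : Fin (n - m), a ≠ b → ((j a : ZMod n) ≠ (j b : ZMod n)))
    (S : Matrix (Fin n) (Fin n) ℂ[X])
    (hS1 : ∀ (a : Fin m) (c : Fin n),
      S (Fin.castLE hm.le a) c = Polynomial.C (xi n ^ (((c : ℕ) : ℤ) * l a)) * X ^ (c : ℕ))
    (hS2 : ∀ (b : Fin (n - m)) (c : Fin n),
      S ⟨m + (b : ℕ), by have := b.isLt; omega⟩ c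
        = Polynomial.C (xi n ^ (((c : ℕ) : ℤ) * j b)) * X ^ ((n - (c : ℕ)) % n))
    (Cval : ℂ)
    (hC : Cval = (∏ a, xi n ^ ((m : ℤ) * j a)) *
        (∏ p ∈ Finset.univ.filter (fun p : Fin (n - m) × Fin (n - m) => p.1 < p.2),
          (xi n ^ j p.2 - xi n ^ j p.1)) *
        (∏ p ∈ Finset.univ.filter (fun p : Fin m × Fin m => p.1 < p.2),
          (xi n ^ l p.2 - xi n ^ l p.1)))
    (p : Finset (Fin n)) (hp : p.card = m) :
    ((S.submatrix (Fin.castLE hm.le) (fun i => (p.orderIsoOfFin hp i : Fin n))).det *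
      (S.submatrix (fun b : Fin (n - m) => (⟨m + (b : ℕ), by have := b.isLt; omega⟩ : Fin n))
        (fun i => ((pᶜ.orderIsoOfFin
          (by rw [Finset.card_compl, hp, Fintype.card_fin])) i : Fin n))).det
        = Polynomial.C Cval * X ^ (m * (m - 1) / 2 + (n - m) * (n - m + 1) / 2))
      ↔ p = Finset.univ.filter (fun c : Fin n => (c : ℕ) < m) := by
  have hn0 : n ≠ 0 := by omega
  have hxne := xi_ne_zero n
  have hcard : pᶜ.card = n - m := by rw [Finset.card_compl, hp, Fintype.card_fin]
  have hCne : Cval ≠ 0 := by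
    rw [hC]
    refine mul_ne_zero (mul_ne_zero ?_ ?_) ?_
    · exact Finset.prod_ne_zero_iff.mpr fun a _ => zpow_ne_zero _ hxne
    · refine Finset.prod_ne_zero_iff.mpr fun q hq => sub_ne_zero.mpr fun he => ?_
      have hne : q.1 ≠ q.2 := ne_of_lt (Finset.mem_filter.mp hq).2
      exact hj q.2 q.1 (Ne.symm hne) (xi_zpow_inj hn0 he)
    · refine Finset.prod_ne_zero_iff.mpr fun q hq => sub_ne_zero.mpr fun he => ?_
      have hne : q.1 ≠ q.2 := ne_of_lt (Finset.mem_filter.mp hq).2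
      exact hl q.2 q.1 (Ne.symm hne) (xi_zpow_inj hn0 he)
  have hM1 : S.submatrix (Fin.castLE hm.le) (fun i => (p.orderIsoOfFin hp i : Fin n))
      = Matrix.of fun a k =>
          (C (xi n ^ ((((p.orderIsoOfFin hp k : Fin n) : ℕ) : ℤ) * l a)) : ℂ[X])
          * X ^ ((p.orderIsoOfFin hp k : Fin n) : ℕ) := by
    ext a k
    rw [Matrix.submatrix_apply, hS1]
    rfl
  have hM2 : S.submatrix
        (fun b : Fin (n - m) => (⟨m + (b : ℕ), by have := b.isLt; omega⟩ : Fin n))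
        (fun i => ((pᶜ.orderIsoOfFin
          (by rw [Finset.card_compl, hp, Fintype.card_fin])) i : Fin n))
      = Matrix.of fun b k =>
          (C (xi n ^ ((((pᶜ.orderIsoOfFin hcard k : Fin n) : ℕ) : ℤ) * j b)) : ℂ[X])
          * X ^ ((n - ((pᶜ.orderIsoOfFin hcard k : Fin n) : ℕ)) % n) := by
    ext b k
    rw [Matrix.submatrix_apply, hS2]
    rfl
  rw [hM1, hM2,
    det_C_mul_X_pow (fun a k => xi n ^ ((((p.orderIsoOfFin hp k : Fin n) : ℕ) : ℤ) * l a))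
      (fun k => ((p.orderIsoOfFin hp k : Fin n) : ℕ)),
    det_C_mul_X_pow (fun b k => xi n ^ ((((pᶜ.orderIsoOfFin hcard k : Fin n) : ℕ) : ℤ) * j b))
      (fun k => (n - ((pᶜ.orderIsoOfFin hcard k : Fin n) : ℕ)) % n),
    C_mul_X_pow_mul, C_mul_X_pow_eq_iff hCne]
  constructor
  · rintro ⟨-, hEsum⟩
    refine exponent_eq_imp hn hodd hm0 hm p hp ?_
    rw [← sum_orderIso p hp (fun c : Fin n => (c : ℕ)),
        ← sum_orderIso pᶜ hcard (fun c : Fin n => (n - (c : ℕ)) % n)]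
    exact hEsum
  · intro hpe
    subst hpe
    have hval1 := orderIso_initial hm.le hp
    have hval2 := orderIso_compl hm hcard
    refine ⟨?_, ?_⟩
    · have hD1m : ((fun a k => xi n ^ (((((Finset.univ.filter
          (fun c : Fin n => (c : ℕ) < m)).orderIsoOfFin hp k : Fin n) : ℕ) : ℤ) * l a))
            : Matrix (Fin m) (Fin m) ℂ)
          = Matrix.vandermonde (fun a => xi n ^ l a) := by
        funext a k
        show xi n ^ _ = _
        rw [Matrix.vandermonde_apply, hval1 k, mul_comm, zpow_mul, zpow_natCast]
      have hD2m : ((fun b k => xi n ^ (((((Finset.univ.filter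
          (fun c : Fin n => (c : ℕ) < m))ᶜ.orderIsoOfFin hcard k : Fin n) : ℕ) : ℤ) * j b))
            : Matrix (Fin (n - m)) (Fin (n - m)) ℂ)
          = Matrix.of (fun b k => (xi n ^ ((m : ℤ) * j b)) *
              Matrix.vandermonde (fun b => xi n ^ j b) b k) := by
        funext b k
        show xi n ^ _ = _
        rw [Matrix.of_apply, Matrix.vandermonde_apply, hval2 k]
        have hcast : (((m + (k : ℕ) : ℕ)) : ℤ) * j b
            = (m : ℤ) * j b + j b * ((k : ℕ) : ℤ) := by push_cast; ring
        rw [hcast, zpow_add₀ hxne]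
        congr 1
        rw [zpow_mul, zpow_natCast]
      rw [hD1m, hD2m, Matrix.det_vandermonde, Matrix.det_mul_column, Matrix.det_vandermonde, hC,
        prod_pairs_eq (fun a b => xi n ^ j b - xi n ^ j a),
        prod_pairs_eq (fun a b => xi n ^ l b - xi n ^ l a)]
      ring
    · have hE1 : (∑ k : Fin m, (((Finset.univ.filter
          (fun c : Fin n => (c : ℕ) < m)).orderIsoOfFin hp k : Fin n) : ℕ))
          = m * (m - 1) / 2 := by
        have h1 : (∑ k : Fin m, (((Finset.univ.filter
            (fun c : Fin n => (c : ℕ) < m)).orderIsoOfFin hp k : Fin n) : ℕ))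
            = ∑ k : Fin m, (k : ℕ) := Finset.sum_congr rfl fun k _ => hval1 k
        rw [h1, Fin.sum_univ_eq_sum_range (fun i => i) m]
        have h2 := Finset.sum_range_id_mul_two m
        omega
      have hE2 : (∑ k : Fin (n - m), (n - (((Finset.univ.filter
          (fun c : Fin n => (c : ℕ) < m))ᶜ.orderIsoOfFin hcard k : Fin n) : ℕ)) % n)
          = (n - m) * (n - m + 1) / 2 := by
        have h1 : (∑ k : Fin (n - m), (n - (((Finset.univ.filter
            (fun c : Fin n => (c : ℕ) < m))ᶜ.orderIsoOfFin hcard k : Fin n) : ℕ)) % n)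
            = ∑ k : Fin (n - m), ((n - m) - (k : ℕ)) := by
          refine Finset.sum_congr rfl fun k _ => ?_
          rw [hval2 k]
          have hk := k.isLt
          rw [Nat.mod_eq_of_lt (by omega)]
          omega
        rw [h1, Fin.sum_univ_eq_sum_range (fun i => (n - m) - i) (n - m), sum_sub_range]
      rw [hE1, hE2]
end

section
/- Let n be an odd natural number, let 0 < m < n, let A = {0, 1, …, m−1}, and let B ⊆ {0, 1, …, n−1} with |B| = m and B ≠ A. Define ι(k) = (n−k) mod n. Then Σ_{k ∈ A∖B} ι(k) + Σ_{k ∈ B∖A} k ≠ Σ_{k ∈ A∖B} k + Σ_{k ∈ B∖A} ι(k). -/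
theorem sum_iota_ne (n : ℕ) (hodd : Odd n) (m : ℕ) (hm0 : 0 < m) (hm : m < n)
    (B : Finset ℕ) (hB : B ⊆ Finset.range n) (hcard : B.card = m)
    (hne : B ≠ Finset.range m) :
    (∑ k ∈ Finset.range m \ B, (n - k) % n) + ∑ k ∈ B \ Finset.range m, k
      ≠ (∑ k ∈ Finset.range m \ B, k) + ∑ k ∈ B \ Finset.range m, (n - k) % n := by
  set A := Finset.range m with hA
  set D := A \ B with hDdef
  set E := B \ A with hEdef
  have hDlt : ∀ k ∈ D, k < m := fun k hk =>
    Finset.mem_range.mp (Finset.mem_sdiff.mp hk).1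
  have hEge : ∀ k ∈ E, m ≤ k := fun k hk =>
    Nat.le_of_not_lt fun h => (Finset.mem_sdiff.mp hk).2 (Finset.mem_range.mpr h)
  have hElt : ∀ k ∈ E, k < n := fun k hk =>
    Finset.mem_range.mp (hB (Finset.mem_sdiff.mp hk).1)
  have hcardA : A.card = m := Finset.card_range m
  have hcardDE : D.card = E.card := by
    have h1 := Finset.card_sdiff_add_card_inter A B
    have h2 := Finset.card_sdiff_add_card_inter B A
    rw [Finset.inter_comm] at h2
    rw [← hDdef] at h1
    rw [← hEdef] at h2
    omega
  have hDne : D.Nonempty := by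
    rw [Finset.nonempty_iff_ne_empty]
    intro h
    have hsub : A ⊆ B := by
      intro x hx
      by_contra hxB
      have : x ∈ D := Finset.mem_sdiff.mpr ⟨hx, hxB⟩
      simp [h] at this
    exact hne ((Finset.eq_of_subset_of_card_le hsub (by omega)).symm)
  have hd1 : 1 ≤ D.card := Finset.card_pos.mpr hDne
  -- sum over E: (n-k)%n + k = n
  have hEsum : (∑ k ∈ E, (n - k) % n) + ∑ k ∈ E, k = E.card * n := by
    rw [← Finset.sum_add_distrib]
    rw [Finset.sum_congr rfl (fun k hk => by
      have h1 := hEge k hk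
      have h2 := hElt k hk
      have : (n - k) % n = n - k := Nat.mod_eq_of_lt (by omega)
      omega : ∀ k ∈ E, (n - k) % n + k = n)]
    simp [Finset.sum_const, Nat.smul_one_eq_cast]
  -- S3 < S2
  have hS3 : ∑ k ∈ D, k ≤ D.card * (m - 1) := by
    have := Finset.sum_le_card_nsmul D id (m - 1) (fun k hk => by
      have := hDlt k hk; simp; omega)
    simpa [smul_eq_mul] using this
  have hS2 : E.card * m ≤ ∑ k ∈ E, k := by
    have := Finset.card_nsmul_le_sum E id m (fun k hk => by
      have := hEge k hk; simpa using this)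
    simpa [smul_eq_mul] using this
  rw [← hcardDE] at hEsum hS2
  have hmul : D.card * (m - 1) + D.card * 1 = D.card * m := by
    rw [← Nat.mul_add]; congr 1; omega
  have hS32 : ∑ k ∈ D, k < ∑ k ∈ E, k := by omega
  by_cases h0 : (0 : ℕ) ∈ D
  · -- 0 ∈ D : parity argument
    have hDsum : (∑ k ∈ D, ((n - k) % n + k)) = (D.card - 1) * n := by
      rw [← Finset.add_sum_erase D _ h0]
      have : (n - 0) % n + 0 = 0 := by simp
      rw [this, zero_add]
      rw [Finset.sum_congr rfl (fun k hk => by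
        have hk0 : k ≠ 0 := Finset.ne_of_mem_erase hk
        have hkD : k ∈ D := Finset.mem_of_mem_erase hk
        have h1 := hDlt k hkD
        have : (n - k) % n = n - k := Nat.mod_eq_of_lt (by omega)
        omega : ∀ k ∈ D.erase 0, (n - k) % n + k = n)]
      rw [Finset.sum_const, Finset.card_erase_of_mem h0, smul_eq_mul]
    rw [Finset.sum_add_distrib] at hDsum
    have hdn : D.card * n = (D.card - 1) * n + 1 * n := by
      rw [← Nat.add_mul]; congr 1; omega
    obtain ⟨t, ht⟩ := hodd
    omega
  · -- 0 ∉ D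
    have hDsum : (∑ k ∈ D, ((n - k) % n + k)) = D.card * n := by
      rw [Finset.sum_congr rfl (fun k hk => by
        have hk0 : k ≠ 0 := fun h => h0 (h ▸ hk)
        have h1 := hDlt k hk
        have : (n - k) % n = n - k := Nat.mod_eq_of_lt (by omega)
        omega : ∀ k ∈ D, (n - k) % n + k = n)]
      rw [Finset.sum_const, smul_eq_mul]
    rw [Finset.sum_add_distrib] at hDsum
    omega
end

section
/- Let n > 2 be an odd natural number, ξ = exp(2πi/n), and ι(c) = (n−c) mod n. Consider the 2n×n matrix A(c(t)) over ℂ[t] whose rows, indexed by (ε, l) ∈ {0,1} × ℤ_n, are given by: row (0, l) has entries ξ^{c·l} t^c and row (1, l) has entries ξ^{c·l} t^{ι(c)}, for 0 ≤ c ≤ n−1. Then for every choice of n distinct rows of A(c(t)), the determinant of the resulting n×n matrix is a nonzero polynomial in ℂ[t]. -/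
open Polynomial

private lemma prod_C_mul_X_pow {ι : Type*} (s : Finset ι) (f : ι → ℂ) (g : ι → ℕ) :
    (∏ i ∈ s, (Polynomial.C (f i) * X ^ (g i)))
      = Polynomial.C (∏ i ∈ s, f i) * X ^ (∑ i ∈ s, g i) := by
  rw [Finset.prod_mul_distrib, ← map_prod, Finset.prod_pow_eq_pow_sum]

private lemma sum_lt_sum_downclosed {α : Type*} [DecidableEq α] (f : α → ℤ)
    (s t : Finset α) (hcard : t.card = s.card) (hne : t ≠ s)
    (hdc : ∀ x ∈ s, ∀ y ∉ s, f x < f y) :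
    ∑ x ∈ s, f x < ∑ x ∈ t, f x := by
  classical
  have hsum_t : ∑ x ∈ t ∩ s, f x + ∑ x ∈ t \ s, f x = ∑ x ∈ t, f x :=
    Finset.sum_inter_add_sum_sdiff t s f
  have hsum_s : ∑ x ∈ s ∩ t, f x + ∑ x ∈ s \ t, f x = ∑ x ∈ s, f x :=
    Finset.sum_inter_add_sum_sdiff s t f
  have hcard1 : (t \ s).card + (t ∩ s).card = t.card :=
    Finset.card_sdiff_add_card_inter t s
  have hcard2 : (s \ t).card + (s ∩ t).card = s.card :=
    Finset.card_sdiff_add_card_inter s t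
  have hinter : (t ∩ s) = (s ∩ t) := Finset.inter_comm t s
  have hcards : (t \ s).card = (s \ t).card := by
    rw [hinter] at hcard1; omega
  have hne2 : (s \ t).Nonempty := by
    rcases Finset.eq_empty_or_nonempty (s \ t) with he | hne2
    · exfalso; apply hne
      have hsub : s ⊆ t := by rwa [Finset.sdiff_eq_empty_iff_subset] at he
      exact (Finset.eq_of_subset_of_card_le hsub (le_of_eq hcard)).symm
    · exact hne2
  have hne1pos : 0 < (t \ s).card := by
    rw [hcards]; exact Finset.card_pos.mpr hne2
  obtain ⟨x0, hx0mem, hx0min⟩ := Finset.exists_min_image (t \ s) f (Finset.card_pos.mp hne1pos)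
  have hx0ns : x0 ∉ s := (Finset.mem_sdiff.mp hx0mem).2
  have hub : ∑ x ∈ s \ t, f x ≤ (s \ t).card • (f x0 - 1) := by
    apply Finset.sum_le_card_nsmul
    intro y hy
    have hys : y ∈ s := (Finset.mem_sdiff.mp hy).1
    have := hdc y hys x0 hx0ns
    omega
  have hlb : (t \ s).card • f x0 ≤ ∑ x ∈ t \ s, f x :=
    Finset.card_nsmul_le_sum _ _ _ (fun y hy => hx0min y hy)
  rw [nsmul_eq_mul] at hub hlb
  have hmpos : (1:ℤ) ≤ ((s \ t).card : ℤ) := by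
    exact_mod_cast Finset.card_pos.mpr hne2
  have hprod : ((s \ t).card : ℤ) * (f x0 - 1) < ((t \ s).card : ℤ) * f x0 := by
    rw [hcards]; nlinarith
  rw [← hsum_t, ← hsum_s, hinter]
  linarith

theorem minors_of_orbit_matrix_nonzero
    (n : ℕ) (hn : 2 < n) (hodd : Odd n)
    (A : Matrix (Fin 2 × Fin n) (Fin n) ℂ[X])
    (hA0 : ∀ (l c : Fin n),
      A (0, l) c = Polynomial.C (xi n ^ ((c : ℕ) * (l : ℕ))) * X ^ (c : ℕ))
    (hA1 : ∀ (l c : Fin n),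
      A (1, l) c = Polynomial.C (xi n ^ ((c : ℕ) * (l : ℕ))) * X ^ ((n - (c : ℕ)) % n)) :
    ∀ rows : Fin n → Fin 2 × Fin n, Function.Injective rows →
      (A.submatrix rows id).det ≠ 0 := by
  intro rows hrows
  classical
  have npos : 0 < n := by omega
  haveI : NeZero n := ⟨by omega⟩
  -- primitive root facts
  have hprim : IsPrimitiveRoot (xi n) n := by
    simpa [xi] using Complex.isPrimitiveRoot_exp n (by omega)
  have hxin : xi n ^ n = 1 := hprim.pow_eq_one
  have hxine : xi n ≠ 0 := by
    simp [xi, Complex.exp_ne_zero]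
  have hxpow : ∀ s t : ℕ, s % n = t % n → xi n ^ s = xi n ^ t := by
    have key : ∀ s : ℕ, xi n ^ s = xi n ^ (s % n) := by
      intro s
      conv_lhs => rw [← Nat.div_add_mod s n]
      rw [pow_add, pow_mul, hxin, one_pow, one_mul]
    intro s t hst
    rw [key s, key t, hst]
  have hxinj : ∀ u v : Fin n, xi n ^ (u : ℕ) = xi n ^ (v : ℕ) → u = v := by
    intro u v huv
    exact Fin.ext (hprim.pow_inj u.2 v.2 huv)
  have hfin2 : ∀ x : Fin 2, x = 0 ∨ x = 1 := by decide
  -- basic sets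
  set S1 : Finset (Fin n) := Finset.univ.filter (fun k => (rows k).1 = 1) with hS1def
  set b : ℕ := S1.card with hbdef
  have hbn : b ≤ n := by
    have := Finset.card_le_univ S1
    simpa using this
  have hb2 : 2 * b ≠ n := by
    obtain ⟨m, hm⟩ := hodd; omega
  set a0 : ℕ := if 2 * b < n then n - b else n - b + 1 with ha0def
  set aa : ℕ := n - b with haadef
  have hba : b + aa = n := by omega
  -- column enumeration
  set eCol : (Fin b ⊕ Fin aa) ≃ Fin n :=
    (finSumFinEquiv.trans (finCongr hba)).trans (Equiv.addLeft (Fin.ofNat n a0)) with heCol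
  have hcol1 : ∀ q : Fin b, ((eCol (Sum.inl q) : Fin n) : ℕ) = (a0 + (q : ℕ)) % n := by
    intro q
    simp [heCol, Equiv.addLeft, Fin.add_def, Fin.val_natCast, Nat.mod_add_mod]
  have hcol2 : ∀ r : Fin aa, ((eCol (Sum.inr r) : Fin n) : ℕ) = (a0 + (b + (r : ℕ))) % n := by
    intro r
    simp [heCol, Equiv.addLeft, Fin.add_def, Fin.val_natCast, Nat.mod_add_mod]
  set Cstar : Finset (Fin n) := Finset.image (fun q : Fin b => eCol (Sum.inl q)) Finset.univ
    with hCstarDef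
  have hCstar_card : Cstar.card = b := by
    rw [hCstarDef, Finset.card_image_of_injective _
      (fun q q' h => Sum.inl_injective (eCol.injective h))]
    simp
  have hcolin : ∀ q : Fin b, eCol (Sum.inl q) ∈ Cstar := by
    intro q; rw [hCstarDef]; exact Finset.mem_image_of_mem _ (Finset.mem_univ q)
  have hcolout : ∀ r : Fin aa, eCol (Sum.inr r) ∉ Cstar := by
    intro r hmem
    rw [hCstarDef, Finset.mem_image] at hmem
    obtain ⟨q, _, hq⟩ := hmem
    exact (by simp : (Sum.inl q : Fin b ⊕ Fin aa) ≠ Sum.inr r) (eCol.injective hq)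
  have hmem : ∀ x : Fin n, x ∈ Cstar ↔
      (if 2 * b < n then n - b ≤ (x : ℕ) else ((x : ℕ) = 0 ∨ n - b + 1 ≤ (x : ℕ))) := by
    intro x
    have hax : ∀ (hc : 2 * b < n), a0 = n - b := by
      intro hc; rw [ha0def, if_pos hc]
    have hax' : ∀ (hc : ¬ 2 * b < n), a0 = n - b + 1 := by
      intro hc; rw [ha0def, if_neg hc]
    constructor
    · intro hx
      rw [hCstarDef, Finset.mem_image] at hx
      obtain ⟨q, -, rfl⟩ := hx
      have hq : (q : ℕ) < b := q.2
      have hv := hcol1 q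
      by_cases hc : 2 * b < n
      · rw [if_pos hc, hv, hax hc, Nat.mod_eq_of_lt (by omega)]
        omega
      · rw [if_neg hc]
        have ha := hax' hc
        have hn2b : n < 2 * b := by omega
        rcases Nat.lt_or_ge (a0 + (q : ℕ)) n with hlt | hge
        · right; rw [hv, Nat.mod_eq_of_lt hlt]; omega
        · left
          have he : a0 + (q : ℕ) = n := by omega
          rw [hv, he, Nat.mod_self]
    · intro hx
      rw [hCstarDef, Finset.mem_image]
      have hxlt : (x : ℕ) < n := x.2
      by_cases hc : 2 * b < n
      · rw [if_pos hc] at hx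
        have ha := hax hc
        refine ⟨⟨(x : ℕ) - (n - b), by omega⟩, Finset.mem_univ _, ?_⟩
        apply Fin.ext
        rw [hcol1]
        simp only
        rw [ha, Nat.mod_eq_of_lt (by omega)]
        omega
      · rw [if_neg hc] at hx
        have ha := hax' hc
        have hn2b : n < 2 * b := by omega
        rcases hx with hx0 | hxge
        · refine ⟨⟨b - 1, by omega⟩, Finset.mem_univ _, ?_⟩
          apply Fin.ext
          rw [hcol1]
          simp only
          have he : a0 + (b - 1) = n := by omega
          rw [he, Nat.mod_self, hx0]
        · refine ⟨⟨(x : ℕ) - (n - b + 1), by omega⟩, Finset.mem_univ _, ?_⟩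
          apply Fin.ext
          rw [hcol1]
          simp only
          rw [Nat.mod_eq_of_lt (by omega)]
          omega
  -- weight function
  set wt : Fin n → ℤ := fun i => (((n - (i : ℕ)) % n : ℕ) : ℤ) - ((i : ℕ) : ℤ) with hwtdef
  have wt_eq : ∀ i : Fin n, wt i = if (i : ℕ) = 0 then 0 else (n : ℤ) - 2 * ((i : ℕ) : ℤ) := by
    intro i
    by_cases hi : (i : ℕ) = 0
    · simp [hwtdef, hi]
    · have hlt : (i : ℕ) < n := i.2
      have h1 : (n - (i : ℕ)) % n = n - (i : ℕ) := Nat.mod_eq_of_lt (by omega)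
      simp only [hwtdef, h1, hi, if_false]
      push_cast [Nat.cast_sub (le_of_lt hlt)]
      ring
  have hdc : ∀ x ∈ Cstar, ∀ y ∉ Cstar, wt x < wt y := by
    intro x hx y hy
    rw [hmem] at hx hy
    rw [wt_eq, wt_eq]
    have hxlt : (x : ℕ) < n := x.2
    have hylt : (y : ℕ) < n := y.2
    by_cases hc : 2 * b < n
    · rw [if_pos hc] at hx hy
      split_ifs <;> omega
    · rw [if_neg hc] at hx hy
      push_neg at hy
      split_ifs <;> omega
  -- permutation weights
  set Wdeg : Equiv.Perm (Fin n) → ℕ :=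
    fun σ => ∑ i : Fin n, (if (rows (σ i)).1 = 0 then (i : ℕ) else (n - (i : ℕ)) % n)
    with hWdegDef
  set C1 : Equiv.Perm (Fin n) → Finset (Fin n) :=
    fun σ => Finset.univ.filter (fun i => (rows (σ i)).1 = 1) with hC1def
  have hW : ∀ σ : Equiv.Perm (Fin n),
      ((Wdeg σ : ℕ) : ℤ) = (∑ i : Fin n, ((i : ℕ) : ℤ)) + ∑ i ∈ C1 σ, wt i := by
    intro σ
    have hr1 : C1 σ = Finset.univ.filter (fun i => (rows (σ i)).1 = 1) := rfl
    have hr2 : Wdeg σ = ∑ i : Fin n,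
        (if (rows (σ i)).1 = 0 then (i : ℕ) else (n - (i : ℕ)) % n) := rfl
    rw [hr1, hr2, Nat.cast_sum, Finset.sum_filter, ← Finset.sum_add_distrib]
    apply Finset.sum_congr rfl
    intro i _
    rcases hfin2 ((rows (σ i)).1) with he | he
    · rw [if_pos he, if_neg (by rw [he]; decide)]
      simp
    · rw [if_neg (by rw [he]; decide), if_pos he, hwtdef]
      push_cast
      ring
  have hC1card : ∀ σ : Equiv.Perm (Fin n), (C1 σ).card = b := by
    intro σ
    have himg : Finset.image σ (C1 σ) = S1 := by
      ext x
      simp only [hC1def, hS1def, Finset.mem_image, Finset.mem_filter, Finset.mem_univ, true_and]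
      constructor
      · rintro ⟨i, hi, rfl⟩; exact hi
      · intro hx; exact ⟨σ.symm x, by simp [hx], by simp⟩
    rw [hbdef, ← himg, Finset.card_image_of_injective _ σ.injective]
  -- the target degree
  have hd_nonneg : 0 ≤ (∑ i : Fin n, ((i : ℕ) : ℤ)) + ∑ i ∈ Cstar, wt i := by
    have h1 : ∑ i ∈ Cstar, wt i = ∑ i : Fin n, (if i ∈ Cstar then wt i else 0) := by
      rw [Finset.sum_ite_mem, Finset.univ_inter]
    rw [h1, ← Finset.sum_add_distrib]
    refine Finset.sum_nonneg fun i _ => ?_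
    simp only [hwtdef]
    have h2 : (0 : ℤ) ≤ (((n - (i : ℕ)) % n : ℕ) : ℤ) := Int.natCast_nonneg _
    have h3 : (0 : ℤ) ≤ ((i : ℕ) : ℤ) := Int.natCast_nonneg _
    split_ifs <;> linarith
  set dstar : ℕ := ((∑ i : Fin n, ((i : ℕ) : ℤ)) + ∑ i ∈ Cstar, wt i).toNat with hdstarDef
  have hdcast : ((dstar : ℕ) : ℤ) = (∑ i : Fin n, ((i : ℕ) : ℤ)) + ∑ i ∈ Cstar, wt i :=
    Int.toNat_of_nonneg hd_nonneg
  have hkey : ∀ σ : Equiv.Perm (Fin n), Wdeg σ = dstar ↔ C1 σ = Cstar := by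
    intro σ
    constructor
    · intro hWσ
      by_contra hne
      have hlt := sum_lt_sum_downclosed wt Cstar (C1 σ)
        (by rw [hC1card, hCstar_card]) hne hdc
      have hcast : ((Wdeg σ : ℕ) : ℤ) = ((dstar : ℕ) : ℤ) := by exact_mod_cast hWσ
      rw [hW σ, hdcast] at hcast
      omega
    · intro hEq
      have : ((Wdeg σ : ℕ) : ℤ) = ((dstar : ℕ) : ℤ) := by rw [hW, hEq, hdcast]
      exact_mod_cast this
  -- the coefficient matrix
  set G : Matrix (Fin n) (Fin n) ℂ := fun k i =>
    if ((rows k).1 = 1 ↔ i ∈ Cstar) then xi n ^ ((i : ℕ) * (((rows k).2 : Fin n) : ℕ)) else 0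
    with hGdef
  have hcoeff : ((A.submatrix rows id).det).coeff dstar = G.det := by
    rw [Matrix.det_apply, Matrix.det_apply, Polynomial.finset_sum_coeff]
    apply Finset.sum_congr rfl
    intro σ _
    have hent : ∀ i : Fin n, (A.submatrix rows id) (σ i) i
        = Polynomial.C (xi n ^ ((i : ℕ) * (((rows (σ i)).2 : Fin n) : ℕ)))
          * X ^ (if (rows (σ i)).1 = 0 then (i : ℕ) else (n - (i : ℕ)) % n) := by
      intro i
      rw [Matrix.submatrix_apply, id_eq]
      rcases hfin2 ((rows (σ i)).1) with he | he
      · rw [if_pos he]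
        have hp : rows (σ i) = (0, (rows (σ i)).2) := Prod.ext he rfl
        rw [hp, hA0]
      · rw [if_neg (by rw [he]; decide)]
        have hp : rows (σ i) = (1, (rows (σ i)).2) := Prod.ext he rfl
        rw [hp, hA1]
    rw [Finset.prod_congr rfl (fun i _ => hent i), prod_C_mul_X_pow]
    rw [Polynomial.coeff_smul, Polynomial.coeff_C_mul, Polynomial.coeff_X_pow]
    have hWrfl : (∑ i : Fin n,
        (if (rows (σ i)).1 = 0 then (i : ℕ) else (n - (i : ℕ)) % n)) = Wdeg σ := rfl
    rw [hWrfl]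
    congr 1
    by_cases hgood : C1 σ = Cstar
    · rw [if_pos (((hkey σ).mpr hgood).symm), mul_one]
      refine (Finset.prod_congr rfl fun i _ => ?_).symm
      have hiff : ((rows (σ i)).1 = 1 ↔ i ∈ Cstar) := by
        rw [← hgood]
        have hr : C1 σ = Finset.univ.filter (fun j => (rows (σ j)).1 = 1) := rfl
        rw [hr]
        simp
      have hG : G (σ i) i = if ((rows (σ i)).1 = 1 ↔ i ∈ Cstar)
          then xi n ^ ((i : ℕ) * (((rows (σ i)).2 : Fin n) : ℕ)) else 0 := rfl
      rw [hG, if_pos hiff]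
    · rw [if_neg (fun hcon => hgood ((hkey σ).mp hcon.symm)), mul_zero]
      have hex : ∃ i, ¬ ((rows (σ i)).1 = 1 ↔ i ∈ Cstar) := by
        by_contra hall
        push_neg at hall
        apply hgood
        ext i
        have hr : C1 σ = Finset.univ.filter (fun j => (rows (σ j)).1 = 1) := rfl
        rw [hr]
        simp only [Finset.mem_filter, Finset.mem_univ, true_and]
        exact hall i
      obtain ⟨i0, hi0⟩ := hex
      refine (Finset.prod_eq_zero (Finset.mem_univ i0) ?_).symm
      have hG : G (σ i0) i0 = if ((rows (σ i0)).1 = 1 ↔ i0 ∈ Cstar)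
          then xi n ^ ((i0 : ℕ) * (((rows (σ i0)).2 : Fin n) : ℕ)) else 0 := rfl
      rw [hG, if_neg hi0]
  have hGdet : G.det ≠ 0 := by
    have hcompb : b = S1.card := hbdef
    have hcompa : aa = (S1ᶜ).card := by
      rw [Finset.card_compl, Fintype.card_fin, haadef, hbdef]
    set eRow : (Fin b ⊕ Fin aa) ≃ Fin n :=
      ((Equiv.sumCongr ((finCongr hcompb).trans S1.equivFin.symm)
          ((finCongr hcompa).trans (S1ᶜ).equivFin.symm)).trans
        ((Equiv.sumCongr (Equiv.refl _)
            (Equiv.subtypeEquivRight (fun x => Finset.mem_compl))).trans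
          (Equiv.sumCompl (· ∈ S1)))) with heRow
    have hrowin : ∀ p : Fin b, eRow (Sum.inl p) ∈ S1 := by
      intro p
      rw [heRow]
      simp only [Equiv.trans_apply, Equiv.sumCongr_apply, Sum.map_inl,
        Equiv.refl_apply, Equiv.sumCompl_apply_inl]
      exact (S1.equivFin.symm _).2
    have hrowout : ∀ r : Fin aa, eRow (Sum.inr r) ∉ S1 := by
      intro r
      rw [heRow]
      simp only [Equiv.trans_apply, Equiv.sumCongr_apply, Sum.map_inr,
        Equiv.sumCompl_apply_inr]
      exact (Equiv.subtypeEquivRight (fun x => Finset.mem_compl)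
        ((S1ᶜ).equivFin.symm _)).2
    have hrow1 : ∀ p : Fin b, (rows (eRow (Sum.inl p))).1 = 1 := by
      intro p
      have h1 := hrowin p
      rw [hS1def, Finset.mem_filter] at h1
      exact h1.2
    have hrow2 : ∀ r : Fin aa, (rows (eRow (Sum.inr r))).1 = 0 := by
      intro r
      have h1 := hrowout r
      rw [hS1def, Finset.mem_filter] at h1
      rcases hfin2 ((rows (eRow (Sum.inr r))).1) with he | he
      · exact he
      · exact absurd ⟨Finset.mem_univ _, he⟩ h1
    set x1 : Fin b → ℂ := fun p => xi n ^ (((rows (eRow (Sum.inl p))).2 : Fin n) : ℕ)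
      with hx1def
    set x2 : Fin aa → ℂ := fun r => xi n ^ (((rows (eRow (Sum.inr r))).2 : Fin n) : ℕ)
      with hx2def
    have hx1inj : Function.Injective x1 := by
      intro p p' hpp
      have h2 := hxinj _ _ hpp
      have h1 : rows (eRow (Sum.inl p)) = rows (eRow (Sum.inl p')) :=
        Prod.ext (by rw [hrow1, hrow1]) h2
      exact Sum.inl_injective (eRow.injective (hrows h1))
    have hx2inj : Function.Injective x2 := by
      intro r r' hrr
      have h2 := hxinj _ _ hrr
      have h1 : rows (eRow (Sum.inr r)) = rows (eRow (Sum.inr r')) :=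
        Prod.ext (by rw [hrow2, hrow2]) h2
      exact Sum.inr_injective (eRow.injective (hrows h1))
    have hsplit : ∀ (L u v : ℕ), xi n ^ (((u + v) % n) * L)
        = (xi n ^ L) ^ u * (xi n ^ L) ^ v := by
      intro L u v
      rw [← pow_mul, ← pow_mul, ← pow_add]
      apply hxpow
      have hmm : ((u + v) % n * L) % n = ((u + v) * L) % n :=
        Nat.ModEq.mul_right L (Nat.mod_modEq (u + v) n)
      rw [hmm]
      congr 1
      ring
    set B11 : Matrix (Fin b) (Fin b) ℂ :=
      Matrix.of (fun p q => (x1 p) ^ a0 * (x1 p) ^ (q : ℕ)) with hB11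
    set B22 : Matrix (Fin aa) (Fin aa) ℂ :=
      Matrix.of (fun r s => (x2 r) ^ (a0 + b) * (x2 r) ^ (s : ℕ)) with hB22
    have hblocks : G.submatrix ⇑eRow ⇑eCol = Matrix.fromBlocks B11 0 0 B22 := by
      ext ij kl
      have hGr : ∀ k i, G k i = if ((rows k).1 = 1 ↔ i ∈ Cstar)
          then xi n ^ ((i : ℕ) * (((rows k).2 : Fin n) : ℕ)) else 0 := fun _ _ => rfl
      cases ij with
      | inl p =>
        cases kl with
        | inl q =>
          rw [Matrix.submatrix_apply, Matrix.fromBlocks_apply₁₁, hGr,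
            if_pos (iff_of_true (hrow1 p) (hcolin q)), hcol1]
          exact hsplit _ a0 (q : ℕ)
        | inr ss =>
          rw [Matrix.submatrix_apply, Matrix.fromBlocks_apply₁₂, hGr,
            if_neg (fun hiff => (hcolout ss) (hiff.mp (hrow1 p)))]
          simp
      | inr r =>
        cases kl with
        | inl q =>
          rw [Matrix.submatrix_apply, Matrix.fromBlocks_apply₂₁, hGr,
            if_neg (fun hiff => by rw [hrow2 r] at hiff; exact absurd (hiff.mpr (hcolin q)) (by decide))]
          simp
        | inr ss =>
          rw [Matrix.submatrix_apply, Matrix.fromBlocks_apply₂₂, hGr,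
            if_pos (iff_of_false (by rw [hrow2 r]; decide) (hcolout ss)), hcol2,
            ← Nat.add_assoc]
          exact hsplit _ (a0 + b) (ss : ℕ)
    have hd11 : B11.det ≠ 0 := by
      have hfac : B11 = (Matrix.diagonal fun p => (x1 p) ^ a0) * Matrix.vandermonde x1 := by
        ext p q
        rw [Matrix.diagonal_mul]
        rfl
      rw [hfac, Matrix.det_mul, Matrix.det_diagonal]
      exact mul_ne_zero
        (Finset.prod_ne_zero_iff.mpr fun p _ => pow_ne_zero _ (pow_ne_zero _ hxine))
        (Matrix.det_vandermonde_ne_zero_iff.mpr hx1inj)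
    have hd22 : B22.det ≠ 0 := by
      have hfac : B22 = (Matrix.diagonal fun r => (x2 r) ^ (a0 + b)) * Matrix.vandermonde x2 := by
        ext r ss
        rw [Matrix.diagonal_mul]
        rfl
      rw [hfac, Matrix.det_mul, Matrix.det_diagonal]
      exact mul_ne_zero
        (Finset.prod_ne_zero_iff.mpr fun r _ => pow_ne_zero _ (pow_ne_zero _ hxine))
        (Matrix.det_vandermonde_ne_zero_iff.mpr hx2inj)
    have hsub : (G.submatrix ⇑eRow ⇑eCol).det ≠ 0 := by
      rw [hblocks, Matrix.det_fromBlocks_zero₂₁]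
      exact mul_ne_zero hd11 hd22
    intro h0
    apply hsub
    have hps : G.submatrix ⇑eRow ⇑eCol
        = ((G.submatrix ⇑eCol ⇑eCol).submatrix ⇑(eRow.trans eCol.symm) id) := by
      ext i j
      simp [Matrix.submatrix_apply]
    rw [hps, Matrix.det_permute, Matrix.det_submatrix_equiv_self, h0, mul_zero]
  intro hzero
  rw [hzero] at hcoeff
  simp at hcoeff
  exact hGdet hcoeff.symm
end

section
/- Let n be a prime number and ξ = exp(2πi/n). Let F be the n×n discrete Fourier matrix with entries F_{j,k} = ξ^{jk} for 0 ≤ j, k ≤ n−1. Then every minor of F is nonzero: for every 1 ≤ r ≤ n and all subsets R, C ⊆ {0,…,n−1} with |R| = |C| = r, the determinant of the r×r submatrix of F with rows R and columns C is nonzero. -/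
open Polynomial Finset


lemma prod_cast_sub (M : ℕ) : ∀ k : ℕ, ∏ idx ∈ range k, ((M:ℚ) - idx) = k.factorial * M.choose k := by
  intro k
  induction k with
  | zero => simp
  | succ k ih =>
    rw [Finset.prod_range_succ, ih]
    rcases lt_or_ge M (k+1) with h | h
    · rcases Nat.lt_succ_iff_lt_or_eq.mp h with h' | h'
      · rw [Nat.choose_eq_zero_of_lt h', Nat.choose_eq_zero_of_lt (by omega)]; simp
      · subst h'; simp [Nat.choose_eq_zero_of_lt (by omega : M < M + 1)]
    · have h2 : ((M:ℚ) - k) = ((M - k : ℕ) : ℚ) := by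
        push_cast [Nat.cast_sub (by omega : k ≤ M)]; ring
      rw [h2]
      have := Nat.choose_succ_right_eq M k
      have hc : (M.choose (k+1) * (k+1) : ℚ) = (M.choose k * (M - k) : ℕ) := by
        exact_mod_cast congrArg (Nat.cast : ℕ → ℚ) this
      push_cast [Nat.cast_sub (by omega : k ≤ M)] at hc
      push_cast [Nat.factorial_succ]
      rw [← h2]
      nlinarith [hc]

noncomputable def ppoly (k c : ℕ) : ℚ[X] := ∏ idx ∈ range k, (C (c:ℚ) * X - C (idx:ℚ))

lemma ppoly_natDegree_le (k c : ℕ) : (ppoly k c).natDegree ≤ k := by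
  refine le_trans (natDegree_prod_le _ _)
    (le_trans (Finset.sum_le_sum (g := fun _ => 1) (fun i _ => ?_)) (by simp))
  have : C (c:ℚ) * X - C (i:ℚ) = C (c:ℚ) * X + C (-(i:ℚ)) := by rw [map_neg]; ring
  rw [this]; exact natDegree_linear_le

lemma ppoly_eval (k c : ℕ) (N : ℕ) :
    (ppoly k c).eval (N:ℚ) = k.factorial * ((N * c).choose k) := by
  rw [ppoly, eval_prod, ← prod_cast_sub (N * c) k]
  apply Finset.prod_congr rfl
  intro i _
  simp only [eval_sub, eval_mul, eval_C, eval_X]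
  push_cast
  ring

lemma ppoly_coeff_self (c : ℕ) : ∀ k : ℕ, (ppoly k c).coeff k = (c:ℚ)^k := by
  intro k
  induction k with
  | zero => simp [ppoly]
  | succ k ih =>
    rw [ppoly, Finset.prod_range_succ, ← ppoly]
    have expand : ppoly k c * (C (c:ℚ) * X - C (k:ℚ)) =
        C (c:ℚ) * (ppoly k c * X) - C (k:ℚ) * ppoly k c := by ring
    have h1 : (ppoly k c).natDegree < k + 1 :=
      lt_of_le_of_lt (ppoly_natDegree_le k c) (Nat.lt_succ_self k)
    rw [expand, coeff_sub, coeff_C_mul, coeff_C_mul, coeff_eq_zero_of_natDegree_lt h1,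
      coeff_mul_X, ih]
    ring

lemma ppoly_coeff_zero_of_lt {k l : ℕ} (h : k < l) (c : ℕ) : (ppoly k c).coeff l = 0 :=
  coeff_eq_zero_of_natDegree_lt (lt_of_le_of_lt (ppoly_natDegree_le k c) h)



noncomputable def coefw (k l c : ℕ) : ℚ := (k.factorial:ℚ)⁻¹ * (ppoly k c).coeff l

lemma coefw_eq_zero {k l : ℕ} (h : k < l) (c : ℕ) : coefw k l c = 0 := by
  rw [coefw, ppoly_coeff_zero_of_lt h, mul_zero]

noncomputable def wpoly (K l c : ℕ) : ℚ[X] := ∑ k ∈ range (K+1), C (coefw k l c) * X^k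
noncomputable def upoly (K l c : ℕ) : ℚ[X] := ∑ k ∈ range (K+1-l), C (coefw (l+k) l c) * X^k

lemma wpoly_eq (K l c : ℕ) : wpoly K l c = X^l * upoly K l c := by
  have h1 : wpoly K l c = ∑ k ∈ Ico l (K+1), C (coefw k l c) * X^k := by
    rw [wpoly, range_eq_Ico]
    refine (Finset.sum_subset (Finset.Ico_subset_Ico (Nat.zero_le l) le_rfl) ?_).symm
    intro x hx hx2
    have hxl : x < l := by
      simp only [Finset.mem_Ico] at hx hx2; omega
    rw [coefw_eq_zero hxl, map_zero, zero_mul]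
  rw [h1, Finset.sum_Ico_eq_sum_range, upoly, Finset.mul_sum]
  have h2 : K + 1 - l = K + 1 - l := rfl
  apply Finset.sum_congr rfl
  intro k _
  rw [pow_add]; ring

lemma upoly_eval_zero (K l c : ℕ) (hl : l ≤ K) :
    (upoly K l c).eval 0 = (l.factorial:ℚ)⁻¹ * (c:ℚ)^l := by
  rw [upoly, eval_finset_sum]
  rw [Finset.sum_eq_single 0]
  · simp [coefw, ppoly_coeff_self]
  · intro b _ hb; simp [zero_pow hb]
  · intro h; exfalso; apply h; simp; omega

lemma coeff_sum_C_X_pow (n : ℕ) (a : ℕ → ℚ) (d : ℕ) :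
    (∑ k ∈ range n, C (a k) * X^k).coeff d = if d < n then a d else 0 := by
  rw [finset_sum_coeff]
  simp only [coeff_C_mul, coeff_X_pow]
  split_ifs with h
  · rw [Finset.sum_eq_single d]
    · simp
    · intro b _ hb; simp [if_neg (Ne.symm hb)]
    · intro hd; exact absurd (Finset.mem_range.mpr h) hd
  · apply Finset.sum_eq_zero; intro b hb
    have : d ≠ b := by intro e; subst e; exact h (Finset.mem_range.mp hb)
    simp [if_neg this]

lemma entry_eq (K N c : ℕ) (h : N * c ≤ K) :
    ((1 + X : ℚ[X])) ^ (N * c) = ∑ l ∈ range (K+1), C ((N:ℚ)^l) * wpoly K l c := by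
  have rhs : ∑ l ∈ range (K+1), C ((N:ℚ)^l) * wpoly K l c
      = ∑ k ∈ range (K+1), C ((k.factorial:ℚ)⁻¹ * (ppoly k c).eval (N:ℚ)) * X^k := by
    simp only [wpoly, Finset.mul_sum]
    rw [Finset.sum_comm]
    apply Finset.sum_congr rfl
    intro k hk
    have hdeg : (ppoly k c).natDegree < K + 1 :=
      lt_of_le_of_lt (ppoly_natDegree_le k c) (by simpa using hk)
    rw [eval_eq_sum_range' hdeg, Finset.mul_sum, map_sum, Finset.sum_mul]
    apply Finset.sum_congr rfl
    intro l _
    rw [coefw, ← mul_assoc, ← C_mul]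
    exact congrArg (· * X^k) (congrArg C (by ring))
  rw [rhs]
  ext d
  rw [coeff_sum_C_X_pow, coeff_one_add_X_pow]
  split_ifs with hd
  · rw [ppoly_eval]
    have : (d.factorial : ℚ) ≠ 0 := by exact_mod_cast d.factorial_ne_zero
    field_simp
  · rw [Nat.choose_eq_zero_of_lt (by omega), Nat.cast_zero]


lemma sum_distinct_nat : ∀ (r : ℕ) (s : Finset ℕ), s.card = r →
    (∑ i ∈ range r, i) ≤ (∑ x ∈ s, x) ∧
      ((∑ x ∈ s, x) = (∑ i ∈ range r, i) → s = range r) := by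
  intro r
  induction r with
  | zero =>
    intro s hs
    rw [Finset.card_eq_zero.mp hs]
    simp
  | succ r ih =>
    intro s hs
    have hne : s.Nonempty := Finset.card_pos.mp (by omega)
    set M := s.max' hne with hM
    have hMs : M ∈ s := s.max'_mem hne
    have hcard : (s.erase M).card = r := by rw [Finset.card_erase_of_mem hMs, hs]; omega
    have hMr : r ≤ M := by
      by_contra hlt
      push_neg at hlt
      have hsub : s ⊆ range (M+1) := fun x hx => mem_range.mpr (Nat.lt_succ_of_le (s.le_max' x hx))
      have := Finset.card_le_card hsub
      rw [hs, Finset.card_range] at this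
      omega
    obtain ⟨ih1, ih2⟩ := ih (s.erase M) hcard
    have hsum : (∑ x ∈ s, x) = M + ∑ x ∈ s.erase M, x :=
      (Finset.add_sum_erase s id hMs).symm
    rw [Finset.sum_range_succ, hsum]
    constructor
    · omega
    · intro heq
      have hMeq : M = r ∧ (∑ x ∈ s.erase M, x) = ∑ i ∈ range r, i := by omega
      rw [Finset.range_add_one, ← ih2 hMeq.2, ← hMeq.1]
      exact (Finset.insert_erase hMs).symm

lemma sum_fin_injective {r : ℕ} (f : Fin r → ℕ) (hf : Function.Injective f) :
    (∑ i ∈ range r, i) ≤ (∑ i : Fin r, f i) ∧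
      ((∑ i : Fin r, f i) = (∑ i ∈ range r, i) → ∀ i, f i < r) := by
  have hcard : (Finset.image f Finset.univ).card = r := by
    rw [Finset.card_image_of_injective _ hf, Finset.card_univ, Fintype.card_fin]
  have hsum : (∑ x ∈ Finset.image f Finset.univ, x) = ∑ i : Fin r, f i :=
    Finset.sum_image (fun x _ y _ h => hf h)
  obtain ⟨h1, h2⟩ := sum_distinct_nat r _ hcard
  rw [hsum] at h1 h2
  refine ⟨h1, fun he i => ?_⟩
  have : f i ∈ range r := (h2 he) ▸ Finset.mem_image_of_mem f (Finset.mem_univ i)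
  exact Finset.mem_range.mp this



noncomputable def Dpoly (r K : ℕ) (a c : Fin r → ℕ) : ℚ[X] :=
  Matrix.det (Matrix.of fun i j => (1 + X : ℚ[X]) ^ (a i * c j))

section main
variable (r K : ℕ) (a c : Fin r → ℕ)

noncomputable def drow : ((Fin r → ℚ[X]) [⋀^Fin r]→ₗ[ℚ[X]] ℚ[X]) := Matrix.detRowAlternating

noncomputable def wrow (l : ℕ) : Fin r → ℚ[X] := fun j => wpoly K l (c j)
noncomputable def urow (l : ℕ) : Fin r → ℚ[X] := fun j => upoly K l (c j)

lemma expand_det (hK : ∀ i j, a i * c j ≤ K) :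
    Dpoly r K a c = ∑ f ∈ Fintype.piFinset (fun _ : Fin r => range (K+1)),
      (drow r).toMultilinearMap (fun i => (C ((a i : ℚ)))^(f i) • wrow r K c (f i)) := by
  have hrows : (fun i => fun j => (1 + X : ℚ[X]) ^ (a i * c j)) =
      fun i => ∑ l ∈ range (K+1), (C ((a i:ℚ)))^l • wrow r K c l := by
    funext i j
    rw [Finset.sum_apply]
    simp only [Pi.smul_apply, smul_eq_mul, wrow]
    rw [entry_eq K (a i) (c j) (hK i j)]
    exact Finset.sum_congr rfl (fun l _ => by rw [← map_pow])
  have : Dpoly r K a c = (drow r).toMultilinearMap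
      (fun i => fun j => (1 + X : ℚ[X]) ^ (a i * c j)) := rfl
  rw [this, hrows]
  exact (drow r).toMultilinearMap.map_sum_finset _ _
end main

section main2
variable (r K : ℕ) (a c : Fin r → ℕ)

lemma term_eq (f : Fin r → ℕ) [Decidable (Function.Injective f)] :
    (drow r).toMultilinearMap (fun i => (C ((a i : ℚ)))^(f i) • wrow r K c (f i)) =
      if Function.Injective f then
        (∏ i, (C ((a i : ℚ)))^(f i)) *
          ((X:ℚ[X])^(∑ i, f i) * (drow r) (fun i => urow r K c (f i)))
      else 0 := by
  rw [MultilinearMap.map_smul_univ]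
  by_cases hinj : Function.Injective f
  · rw [if_pos hinj]
    have hw : (fun i => wrow r K c (f i)) = fun i => (X:ℚ[X])^(f i) • urow r K c (f i) := by
      funext i j
      simp only [wrow, urow, Pi.smul_apply, smul_eq_mul]
      exact wpoly_eq K (f i) (c j)
    rw [hw]
    rw [show ((drow r).toMultilinearMap (fun i => (X:ℚ[X])^(f i) • urow r K c (f i)))
        = (∏ i, (X:ℚ[X])^(f i)) • (drow r) (fun i => urow r K c (f i)) from
      MultilinearMap.map_smul_univ _ _ _]
    rw [smul_eq_mul, smul_eq_mul, Finset.prod_pow_eq_pow_sum]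
  · rw [if_neg hinj]
    obtain ⟨i, j, hij, hne⟩ := Function.not_injective_iff.mp hinj
    have hz : (drow r) (fun i => wrow r K c (f i)) = 0 :=
      (drow r).map_eq_zero_of_eq _ (by rw [hij]) hne
    rw [show ((drow r).toMultilinearMap (fun i => wrow r K c (f i)))
        = (drow r) (fun i => wrow r K c (f i)) from rfl, hz, smul_zero]
end main2

section main3
variable (r K : ℕ) (a c : Fin r → ℕ)

lemma X_pow_dvd_Dpoly (hK : ∀ i j, a i * c j ≤ K) :
    (X:ℚ[X])^(∑ i ∈ range r, i) ∣ Dpoly r K a c := by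
  classical
  rw [expand_det r K a c hK]
  apply Finset.dvd_sum
  intro f _
  rw [term_eq]
  split_ifs with hinj
  · have hle : (∑ i ∈ range r, i) ≤ ∑ i, f i := (sum_fin_injective f hinj).1
    exact Dvd.dvd.mul_left (Dvd.dvd.mul_right (pow_dvd_pow _ hle) _) _
  · exact dvd_zero _

lemma coeff_Dpoly (hK : ∀ i j, a i * c j ≤ K) (hrK : r ≤ K + 1) :
    (Dpoly r K a c).coeff (∑ i ∈ range r, i) =
      (Matrix.det (Matrix.vandermonde (fun i => (a i:ℚ)))) *
      ((∏ l : Fin r, (((l:ℕ).factorial:ℚ))⁻¹) *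
        Matrix.det (Matrix.vandermonde (fun i => (c i:ℚ)))) := by
  classical
  set m := ∑ i ∈ range r, i with hm
  rw [expand_det r K a c hK, finset_sum_coeff]
  have step : ∀ f ∈ Fintype.piFinset (fun _ : Fin r => range (K+1)),
      ((drow r).toMultilinearMap (fun i => (C ((a i : ℚ)))^(f i) • wrow r K c (f i))).coeff m
      = if Function.Injective f ∧ (∑ i, f i) = m then
          Polynomial.eval 0 ((∏ i, (C ((a i : ℚ)))^(f i)) *
            (drow r) (fun i => urow r K c (f i)))
        else 0 := by
    intro f _
    rw [term_eq]
    by_cases hinj : Function.Injective f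
    · rw [if_pos hinj]
      by_cases hsum : (∑ i, f i) = m
      · rw [if_pos ⟨hinj, hsum⟩, hsum]
        have hcomm : (∏ i, (C ((a i : ℚ)))^(f i)) *
            ((X:ℚ[X])^m * (drow r) (fun i => urow r K c (f i)))
            = (X:ℚ[X])^m * ((∏ i, (C ((a i : ℚ)))^(f i)) *
              (drow r) (fun i => urow r K c (f i))) := by ring
        rw [hcomm]
        have := Polynomial.coeff_X_pow_mul ((∏ i, (C ((a i : ℚ)))^(f i)) *
          (drow r) (fun i => urow r K c (f i))) m 0
        simpa [coeff_zero_eq_eval_zero] using this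
      · rw [if_neg (by tauto)]
        have hlt : m < ∑ i, f i := lt_of_le_of_ne (sum_fin_injective f hinj).1
          (fun h => hsum h.symm)
        have hdvd : (X:ℚ[X])^(m+1) ∣ (∏ i, (C ((a i : ℚ)))^(f i)) *
            ((X:ℚ[X])^(∑ i, f i) * (drow r) (fun i => urow r K c (f i))) :=
          Dvd.dvd.mul_left (Dvd.dvd.mul_right (pow_dvd_pow _ (by omega)) _) _
        exact (Polynomial.X_pow_dvd_iff.mp hdvd) m (Nat.lt_succ_self m)
    · rw [if_neg hinj, if_neg (by tauto), coeff_zero]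
  rw [Finset.sum_congr rfl step, ← Finset.sum_filter]
  have hbij : ∑ f ∈ (Fintype.piFinset (fun _ : Fin r => range (K+1))).filter
        (fun f => Function.Injective f ∧ (∑ i, f i) = m),
        Polynomial.eval 0 ((∏ i, (C ((a i : ℚ)))^(f i)) *
          (drow r) (fun i => urow r K c (f i)))
      = ∑ σ : Equiv.Perm (Fin r),
        Polynomial.eval 0 ((∏ i, (C ((a i : ℚ)))^((σ i : ℕ))) *
          (drow r) (fun i => urow r K c ((σ i : ℕ)))) := by
    refine (Finset.sum_bij (fun (σ : Equiv.Perm (Fin r)) _ => fun i => ((σ i : ℕ))) ?_ ?_ ?_ ?_).symm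
    · intro σ _
      rw [Finset.mem_filter]
      refine ⟨Fintype.mem_piFinset.mpr (fun i => Finset.mem_range.mpr (by
        have := (σ i).isLt; omega)), Fin.val_injective.comp σ.injective, ?_⟩
      rw [Equiv.sum_comp σ (fun i : Fin r => (i : ℕ))]
      exact Fin.sum_univ_eq_sum_range (fun i => i) r
    · intro σ _ τ _ h
      ext i
      exact congrFun h i
    · intro f hf
      rw [Finset.mem_filter] at hf
      obtain ⟨-, hinj, hsum⟩ := hf
      have flt : ∀ i, f i < r := (sum_fin_injective f hinj).2 hsum
      have hinj' : Function.Injective (fun i => (⟨f i, flt i⟩ : Fin r)) := by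
        intro x y h
        exact hinj (congrArg Fin.val h)
      refine ⟨Equiv.ofBijective _ (Finite.injective_iff_bijective.mp hinj'),
        Finset.mem_univ _, ?_⟩
      funext i
      rfl
    · intro σ _
      rfl
  rw [hbij]
  set E0 : ℚ[X] := (drow r) (fun l : Fin r => urow r K c (l:ℕ)) with hE0
  have hperm : ∀ σ : Equiv.Perm (Fin r),
      (drow r) (fun i => urow r K c ((σ i : ℕ))) = Equiv.Perm.sign σ • E0 := by
    intro σ
    exact (drow r).map_perm (fun l : Fin r => urow r K c (l:ℕ)) σ
  have hterm : ∀ σ : Equiv.Perm (Fin r),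
      Polynomial.eval 0 ((∏ i, (C ((a i : ℚ)))^((σ i : ℕ))) *
        (drow r) (fun i => urow r K c ((σ i : ℕ))))
      = (((Equiv.Perm.sign σ : ℤ)):ℚ) * (∏ i, ((a i:ℚ))^((σ i : ℕ))) *
          Polynomial.eval 0 E0 := by
    intro σ
    rw [hperm σ, Units.smul_def, zsmul_eq_mul]
    simp only [eval_mul, eval_prod, eval_pow, eval_C, eval_intCast]
    ring
  rw [Finset.sum_congr rfl (fun σ _ => hterm σ), ← Finset.sum_mul]
  have hvdm : ∑ σ : Equiv.Perm (Fin r),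
      (((Equiv.Perm.sign σ : ℤ)):ℚ) * (∏ i, ((a i:ℚ))^((σ i : ℕ)))
      = Matrix.det (Matrix.vandermonde (fun i => (a i:ℚ))) := by
    rw [← Matrix.det_transpose, Matrix.det_apply']
    apply Finset.sum_congr rfl
    intro σ _
    congr 1
  have hE : Polynomial.eval 0 E0 = (∏ l : Fin r, (((l:ℕ).factorial:ℚ))⁻¹) *
      Matrix.det (Matrix.vandermonde (fun i => (c i:ℚ))) := by
    have h1 : E0 = Matrix.det (Matrix.of fun (l j : Fin r) => upoly K (l:ℕ) (c j)) := rfl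
    have h2 : Polynomial.eval 0 E0 = ((Polynomial.evalRingHom (0:ℚ)).mapMatrix
        (Matrix.of fun (l j : Fin r) => upoly K (l:ℕ) (c j))).det := by
      rw [h1, ← RingHom.map_det]
      rfl
    rw [h2]
    have h3 : ((Polynomial.evalRingHom (0:ℚ)).mapMatrix
        (Matrix.of fun (l j : Fin r) => upoly K (l:ℕ) (c j)))
        = Matrix.of (fun (l j : Fin r) => (((l:ℕ).factorial:ℚ))⁻¹ * ((c j : ℚ))^(l:ℕ)) := by
      ext l j
      simp only [RingHom.mapMatrix_apply, Matrix.map_apply, Matrix.of_apply, coe_evalRingHom]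
      exact upoly_eval_zero K l (c j) (by have := l.isLt; omega)
    rw [h3]
    have h4 := Matrix.det_mul_column (fun l : Fin r => (((l:ℕ).factorial:ℚ))⁻¹)
      (Matrix.of (fun (l j : Fin r) => ((c j : ℚ))^(l:ℕ)))
    rw [show (Matrix.of fun (l j : Fin r) => (((l:ℕ).factorial:ℚ))⁻¹ * ((c j : ℚ))^(l:ℕ))
        = (Matrix.of fun (l j : Fin r) => (fun l : Fin r => (((l:ℕ).factorial:ℚ))⁻¹) l *
          (Matrix.of (fun (l j : Fin r) => ((c j : ℚ))^(l:ℕ))) l j) from rfl, h4]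
    have h5 : (Matrix.of fun (l j : Fin r) => ((c j : ℚ))^(l:ℕ))
        = Matrix.transpose (Matrix.vandermonde (fun i => (c i:ℚ))) := rfl
    rw [h5, Matrix.det_transpose]
  rw [hvdm, hE]
end main3


noncomputable def DZpoly (r : ℕ) (a c : Fin r → ℕ) : ℤ[X] :=
  Matrix.det (Matrix.of fun i j => (1 + X : ℤ[X]) ^ (a i * c j))

lemma DZpoly_map (r K : ℕ) (a c : Fin r → ℕ) :
    Polynomial.mapRingHom (Int.castRingHom ℚ) (DZpoly r a c) = Dpoly r K a c := by
  rw [DZpoly, Dpoly, RingHom.map_det]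
  congr 1
  ext i j
  simp only [RingHom.mapMatrix_apply, Matrix.map_apply, Matrix.of_apply, coe_mapRingHom]
  rw [Polynomial.map_pow]
  simp

lemma DZpoly_coeff_cast (r K : ℕ) (a c : Fin r → ℕ) (d : ℕ) :
    (((DZpoly r a c).coeff d : ℤ) : ℚ) = (Dpoly r K a c).coeff d := by
  rw [← DZpoly_map r K a c, coe_mapRingHom, Polynomial.coeff_map]
  simp

lemma not_dvd_vdm (n r : ℕ) (hp : n.Prime) (a : Fin r → ℕ) (ha : StrictMono a)
    (han : ∀ i, a i < n) :
    ¬ ((n:ℤ) ∣ ∏ i : Fin r, ∏ j ∈ Ioi i, ((a j : ℤ) - (a i : ℤ))) := by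
  intro h
  have hprime : Prime (n:ℤ) := Int.prime_iff_natAbs_prime.mpr (by simpa using hp)
  obtain ⟨i, -, hi⟩ := (hprime.dvd_finset_prod_iff _).mp h
  obtain ⟨j, hj, hdvd⟩ := (hprime.dvd_finset_prod_iff _).mp hi
  have hij : i < j := Finset.mem_Ioi.mp hj
  have h1 : (a i : ℤ) < (a j : ℤ) := by exact_mod_cast ha hij
  have h2 := Int.le_of_dvd (by omega) hdvd
  have h3 : ((a j : ℕ) : ℤ) < (n : ℤ) := by exact_mod_cast han j
  omega

lemma DZpoly_facts (n r : ℕ) (hp : n.Prime) (hr : r ≤ n) (a c : Fin r → ℕ)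
    (ha : StrictMono a) (hc : StrictMono c) (han : ∀ i, a i < n) (hcn : ∀ i, c i < n) :
    (X:ℤ[X])^(∑ i ∈ range r, i) ∣ DZpoly r a c ∧
      ¬ ((n:ℤ) ∣ (DZpoly r a c).coeff (∑ i ∈ range r, i)) := by
  set K := n * n with hKdef
  have hK : ∀ i j, a i * c j ≤ K := fun i j =>
    le_of_lt (Nat.mul_lt_mul'' (han i) (hcn j))
  have hrK : r ≤ K + 1 := by
    have : n ≤ n * n := Nat.le_mul_of_pos_left n hp.pos
    omega
  constructor
  · rw [Polynomial.X_pow_dvd_iff]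
    intro d hd
    have hQ := (Polynomial.X_pow_dvd_iff.mp (X_pow_dvd_Dpoly r K a c hK)) d hd
    rw [← DZpoly_coeff_cast r K a c d] at hQ
    exact_mod_cast hQ
  · intro hdvd
    set m := ∑ i ∈ range r, i with hm
    set e : ℤ := (DZpoly r a c).coeff m with hedef
    set VA : ℤ := ∏ i : Fin r, ∏ j ∈ Ioi i, ((a j : ℤ) - (a i : ℤ)) with hVAdef
    set VC : ℤ := ∏ i : Fin r, ∏ j ∈ Ioi i, ((c j : ℤ) - (c i : ℤ)) with hVCdef
    have hfactne : (∏ l ∈ range r, ((l.factorial : ℚ))) ≠ 0 :=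
      Finset.prod_ne_zero_iff.mpr (fun l _ => by exact_mod_cast l.factorial_ne_zero)
    have heq : e * (∏ l ∈ range r, (l.factorial : ℤ)) = VA * VC := by
      have hcast : ((e * (∏ l ∈ range r, (l.factorial : ℤ)) : ℤ) : ℚ)
          = ((VA * VC : ℤ) : ℚ) := by
        push_cast
        rw [hedef, DZpoly_coeff_cast r K a c m, coeff_Dpoly r K a c hK hrK,
          Matrix.det_vandermonde, Matrix.det_vandermonde]
        rw [show (∏ l : Fin r, (((l:ℕ).factorial:ℚ))⁻¹)
            = ∏ l ∈ range r, ((l.factorial : ℚ))⁻¹ from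
          Fin.prod_univ_eq_prod_range (fun l => ((l.factorial : ℚ))⁻¹) r]
        rw [Finset.prod_inv_distrib]
        field_simp
        rw [hVAdef, hVCdef]
        push_cast
        ring
      exact_mod_cast hcast
    have hdvd2 : (n:ℤ) ∣ VA * VC := by
      rw [← heq]
      exact Dvd.dvd.mul_right hdvd _
    rcases ((Int.prime_iff_natAbs_prime.mpr (by simpa using hp)).dvd_mul.mp hdvd2) with h | h
    · exact not_dvd_vdm n r hp a ha han h
    · exact not_dvd_vdm n r hp c hc hcn h

theorem chebotarev_minors_nonzero (n : ℕ) (hp : n.Prime)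
    (F : Matrix (Fin n) (Fin n) ℂ)
    (hF : ∀ j k : Fin n, F j k = xi n ^ ((j : ℕ) * (k : ℕ))) :
    ∀ r : ℕ, 1 ≤ r → r ≤ n →
      ∀ (R Cc : Finset (Fin n)) (hR : R.card = r) (hC : Cc.card = r),
        (F.submatrix (fun i => (R.orderIsoOfFin hR i : Fin n))
          (fun i => (Cc.orderIsoOfFin hC i : Fin n))).det ≠ 0 := by
  intro r hr1 hrn R Cc hR hC hdet0
  haveI : Fact n.Prime := ⟨hp⟩
  have hn0 : n ≠ 0 := hp.pos.ne'
  have hxi : IsPrimitiveRoot (xi n) n := by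
    simpa [xi] using Complex.isPrimitiveRoot_exp n hn0
  set a : Fin r → ℕ := fun i => ((R.orderIsoOfFin hR i : Fin n) : ℕ) with hadef
  set c : Fin r → ℕ := fun i => ((Cc.orderIsoOfFin hC i : Fin n) : ℕ) with hcdef
  have ha : StrictMono a := by
    intro i j hij
    exact Subtype.coe_lt_coe.mpr ((R.orderIsoOfFin hR).lt_iff_lt.mpr hij)
  have hc : StrictMono c := by
    intro i j hij
    exact Subtype.coe_lt_coe.mpr ((Cc.orderIsoOfFin hC).lt_iff_lt.mpr hij)
  have han : ∀ i, a i < n := fun i => ((R.orderIsoOfFin hR i : Fin n)).isLt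
  have hcn : ∀ i, c i < n := fun i => ((Cc.orderIsoOfFin hC i : Fin n)).isLt
  obtain ⟨⟨D2, hD2⟩, hnd⟩ := DZpoly_facts n r hp hrn a c ha hc han hcn
  set m := ∑ i ∈ range r, i with hm
  set e : ℤ := (DZpoly r a c).coeff m with hedef
  have hev : Polynomial.aeval (xi n - 1) (DZpoly r a c) = (0:ℂ) := by
    have hmap := RingHom.map_det ((Polynomial.aeval (xi n - 1) : ℤ[X] →ₐ[ℤ] ℂ)).toRingHom
      (Matrix.of fun i j => ((1 + X : ℤ[X]) ^ (a i * c j)))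
    have hmat : (((Polynomial.aeval (xi n - 1) : ℤ[X] →ₐ[ℤ] ℂ)).toRingHom.mapMatrix
        (Matrix.of fun i j => ((1 + X : ℤ[X]) ^ (a i * c j))))
        = Matrix.of (fun i j => (xi n) ^ (a i * c j)) := by
      ext i j
      simp only [RingHom.mapMatrix_apply, Matrix.map_apply, Matrix.of_apply,
        AlgHom.toRingHom_eq_coe, RingHom.coe_coe]
      rw [map_pow, map_add, aeval_X, map_one]
      ring_nf
    have hsub : Matrix.det (Matrix.of (fun i j => (xi n) ^ (a i * c j)))
        = (F.submatrix (fun i => (R.orderIsoOfFin hR i : Fin n))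
            (fun i => (Cc.orderIsoOfFin hC i : Fin n))).det := by
      congr 1
      ext i j
      rw [Matrix.submatrix_apply, hF]
      rfl
    show (Polynomial.aeval (xi n - 1) : ℤ[X] →ₐ[ℤ] ℂ).toRingHom (DZpoly r a c) = 0
    rw [DZpoly, hmap, hmat, hsub, hdet0]
  have hxi1 : xi n - 1 ≠ 0 := by
    refine sub_ne_zero.mpr ?_
    have := hxi.pow_ne_one_of_pos_of_lt (one_ne_zero) (hp.one_lt)
    simpa using this
  have h2 : Polynomial.aeval (xi n - 1) D2 = 0 := by
    rw [hD2, map_mul, map_pow, aeval_X] at hev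
    rcases mul_eq_zero.mp hev with h | h
    · exact absurd h (pow_ne_zero m hxi1)
    · exact h
  have hc0 : D2.coeff 0 = e := by
    have h := Polynomial.coeff_X_pow_mul D2 m 0
    rw [← hD2, zero_add] at h
    exact h.symm
  have h3 : (xi n - 1) * (Polynomial.aeval (xi n - 1) (D2.divX)) + (e : ℂ) = 0 := by
    have hsplit := congrArg (Polynomial.aeval (xi n - 1) : ℤ[X] →ₐ[ℤ] ℂ)
      (Polynomial.divX_mul_X_add D2)
    rw [map_add, map_mul, aeval_X, aeval_C, h2, hc0] at hsplit
    have he2 : (algebraMap ℤ ℂ) e = (e:ℂ) := by simp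
    rw [he2] at hsplit
    linear_combination hsplit
  have h4 : Polynomial.aeval (xi n)
      ((Polynomial.X - Polynomial.C 1) * ((D2.divX).comp (Polynomial.X - Polynomial.C 1))
        + Polynomial.C e) = 0 := by
    rw [map_add, map_mul, map_sub, aeval_X, aeval_C, Polynomial.aeval_comp, map_sub,
      aeval_X, aeval_C]
    rw [aeval_C, map_one, show (algebraMap ℤ ℂ) e = (e:ℂ) from by simp]
    exact h3
  have hdvdmin : minpoly ℤ (xi n) ∣
      ((Polynomial.X - Polynomial.C 1) * ((D2.divX).comp (Polynomial.X - Polynomial.C 1))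
        + Polynomial.C e) :=
    minpoly.isIntegrallyClosed_dvd (hxi.isIntegral hp.pos) h4
  rw [← Polynomial.cyclotomic_eq_minpoly hxi hp.pos] at hdvdmin
  obtain ⟨g, hg⟩ := hdvdmin
  have h5 := congrArg (Polynomial.eval 1) hg
  rw [Polynomial.eval_add, Polynomial.eval_mul, Polynomial.eval_sub, Polynomial.eval_X,
    Polynomial.eval_C, Polynomial.eval_C, Polynomial.eval_mul,
    Polynomial.eval_one_cyclotomic_prime] at h5
  exact hnd ⟨Polynomial.eval 1 g, by simpa using h5⟩
end
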